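/- arXiv:2402.00226 — 3 statements merged into one kernel-verified Lean document; each statement's English description precedes it below -/
import Mathlib

section
/- Let γ < ω₁ and let {f_τ : τ ∈ I} be a countable indexed family of automorphisms of T↾(γ+1). Let A ⊆ B ⊆ I be finite. Let b_0,…,b_{n-1} be distinct elements of T_γ, and let c_0,…,c_{n-1}, d_0,…,d_{n-1} be distinct elements of T_{γ+1} such that b_k <_T c_k and b_k <_T d_k for all k < n. Set C = {c_k : k < n} and D = {d_k : k < n}. Let Y ⊆ T_{γ+1} be finite with (C ∪ D) ∩ Y = ∅. Then there exists an indexed family {g_τ : τ ∈ I} of automorphisms of T↾(γ+2) such that: (1) f_τ ⊆ g_τ for all τ ∈ I; (2) for all τ ∈ A, (b_0,…,b_{n-1}) and (c_0,…,c_{n-1}) are g_τ-consistent and (b_0,…,b_{n-1}) and (d_0,…,d_{n-1}) are g_τ-consistent; (3) for all x ∈ C: if τ ∈ A then g_τ(x) and g_τ^{-1}(x) are not in Y ∪ D, and if τ ∈ B \ A then g_τ(x) and g_τ^{-1}(x) are not in C ∪ D ∪ Y; (4) for all x ∈ D: if τ ∈ A then g_τ(x) and g_τ^{-1}(x) are not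 in Y ∪ C, and if τ ∈ B \ A then g_τ(x) and g_τ^{-1}(x) are not in C ∪ D ∪ Y; (5) for all x ∈ Y and τ ∈ B, g_τ(x) and g_τ^{-1}(x) are not in C ∪ D ∪ Y. -/
noncomputable section

/-- The ordinal `ω₁`. -/
def omega1 : Ordinal := (Cardinal.aleph 1).ord

/-- A normal, infinitely splitting `ω₁`-tree structure on the partial order `α`.
`height x` is the height of `x` (the order type of its set of strict predecessors,
which is linearly ordered by `pred_linear`), and `restrict x β` is the unique node
of height `β` below `x` (for `β ≤ height x`). -/
structure OmegaOneTree (α : Type) [PartialOrder α] where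
  height : α → Ordinal
  restrict : α → Ordinal → α
  height_lt_omega1 : ∀ x : α, height x < omega1
  height_strictMono : ∀ {x y : α}, x < y → height x < height y
  pred_linear : ∀ {x y z : α}, y < x → z < x → y ≤ z ∨ z ≤ y
  restrict_le : ∀ (x : α) {β : Ordinal}, β ≤ height x → restrict x β ≤ x
  height_restrict : ∀ (x : α) {β : Ordinal}, β ≤ height x → height (restrict x β) = β
  restrict_eq : ∀ {x y : α} {β : Ordinal}, y ≤ x → height y = β → restrict x β = y
  level_nonempty : ∀ β : Ordinal, β < omega1 → ∃ x : α, height x = β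
  level_countable : ∀ β : Ordinal, {x : α | height x = β}.Countable
  root_exists : ∃ r : α, height r = 0 ∧ ∀ x : α, r ≤ x
  splitting : ∀ x : α, {y : α | x < y ∧ height y = height x + 1}.Infinite
  exists_above : ∀ (x : α) {β : Ordinal}, height x < β → β < omega1 →
    ∃ y : α, x < y ∧ height y = β
  limit_eq : ∀ {x y : α}, height x = height y → Order.IsSuccLimit (height x) →
    (∀ z : α, z < x ↔ z < y) → x = y

variable {α : Type} [PartialOrder α]

/-- The pair `(g, g')` is an automorphism of `T↾(β+1)` together with its inverse:
both are level preserving on `T↾(β+1)`, mutually inverse there, and strictly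
increasing there (hence `g` is an order isomorphism of `T↾(β+1)` onto itself). -/
def IsTreeAuto (T : OmegaOneTree α) (β : Ordinal) (g g' : α → α) : Prop :=
  (∀ x : α, T.height x ≤ β → T.height (g x) = T.height x) ∧
  (∀ x : α, T.height x ≤ β → T.height (g' x) = T.height x) ∧
  (∀ x : α, T.height x ≤ β → g' (g x) = x) ∧
  (∀ x : α, T.height x ≤ β → g (g' x) = x) ∧
  (∀ x y : α, T.height y ≤ β → x < y → g x < g y) ∧
  (∀ x y : α, T.height y ≤ β → x < y → g' x < g' y)

/-- `(g, g')` extends `(f, f')` on `T↾(γ+1)` (i.e. `f ⊆ g` for automorphisms). -/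
def AutoExtends (T : OmegaOneTree α) (γ : Ordinal) (f f' g g' : α → α) : Prop :=
  (∀ x : α, T.height x ≤ γ → g x = f x) ∧ (∀ x : α, T.height x ≤ γ → g' x = f' x)

/-- `X↾lo` and `X` are `g`-consistent: for all `x, y ∈ X`,
`g(x↾lo) = y↾lo` iff `g(x) = y`. -/
def AutoConsistentSet (T : OmegaOneTree α) (g : α → α) (lo : Ordinal) (X : Set α) : Prop :=
  ∀ x ∈ X, ∀ y ∈ X, (g (T.restrict x lo) = T.restrict y lo ↔ g x = y)

/-- The tuples `a` and `b` (with `a = b↾lo` componentwise) are `g`-consistent: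
for all `i, j`, `g(a i) = a j` iff `g(b i) = b j`. -/
def AutoConsistentPair (g : α → α) {n : ℕ} (a b : Fin n → α) : Prop :=
  ∀ i j : Fin n, (g (a i) = a j ↔ g (b i) = b j)

/-- The indexed family of automorphisms `(g, g')` is separated on the injective
tuple `a`: no member of the tuple satisfies a relation with itself, and each
member satisfies at most one relation `g_τ^m(a k) = a i` with earlier members. -/
def AutoSepTuple {ι : Type} (g g' : ι → α → α) {n : ℕ} (a : Fin n → α) : Prop :=
  (∀ (k : Fin n) (τ : ι), g τ (a k) ≠ a k) ∧
  ∀ (k i₁ i₂ : Fin n) (m₁ m₂ : Bool) (τ₁ τ₂ : ι), i₁ < k → i₂ < k →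
    cond m₁ (g τ₁ (a k)) (g' τ₁ (a k)) = a i₁ →
    cond m₂ (g τ₂ (a k)) (g' τ₂ (a k)) = a i₂ →
    i₁ = i₂ ∧ m₁ = m₂ ∧ τ₁ = τ₂

/-- The indexed family of automorphisms `(g, g')` is separated on the finite set
`X`: some injective tuple listing the elements of `X` witnesses separation. -/
def AutoSepSet {ι : Type} (g g' : ι → α → α) (X : Set α) : Prop :=
  ∃ (n : ℕ) (a : Fin n → α), Function.Injective a ∧ Set.range a = X ∧ AutoSepTuple g g' a

/-- The indexed family of automorphisms `(g, g')` of `T↾(β+1)` is separated: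
it is separated on every finite subset of the level `T_β`. -/
def AutoSeparated (T : OmegaOneTree α) (β : Ordinal) {ι : Type} (g g' : ι → α → α) : Prop :=
  ∀ X : Set α, X.Finite → (∀ x ∈ X, T.height x = β) → AutoSepSet g g' X

/-- The fiber of the level `T_{γ+1}` over a node `z` of level `T_γ`. -/
def fib (T : OmegaOneTree α) (γ : Ordinal) (z : α) : Set α :=
  {x | T.height x = γ + 1 ∧ T.restrict x γ = z}

lemma fib_mem {T : OmegaOneTree α} {γ : Ordinal} {z x : α} :
    x ∈ fib T γ z ↔ T.height x = γ + 1 ∧ T.restrict x γ = z := Iff.rfl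

/-- A finite partial injection between two countably infinite sets extends to
a bijection between them. -/
lemma ext_bij {β : Type} (S S' : Set β) (hSc : S.Countable) (hSi : S.Infinite)
    (hS'c : S'.Countable) (hS'i : S'.Infinite) (p : β → β) (W : Set β) (hWfin : W.Finite)
    (hinj : Set.InjOn p (W ∩ S)) (hmap : ∀ x ∈ W ∩ S, p x ∈ S') :
    ∃ u v : β → β, (∀ x ∈ S, u x ∈ S' ∧ v (u x) = x) ∧
      (∀ y ∈ S', v y ∈ S ∧ u (v y) = y) ∧ (∀ x ∈ W ∩ S, u x = p x) := by
  classical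
  haveI : Nonempty β := ⟨hSi.nonempty.choose⟩
  set D0 : Set β := W ∩ S with hD0
  set R0 : Set β := p '' D0 with hR0
  have hD0fin : D0.Finite := hWfin.inter_of_left S
  have hR0fin : R0.Finite := hD0fin.image p
  have hR0sub : R0 ⊆ S' := by rintro y ⟨x, hx, rfl⟩; exact hmap x hx
  have h1 : (S \ D0).Infinite := hSi.diff hD0fin
  have h2 : (S' \ R0).Infinite := hS'i.diff hR0fin
  have e1 : Nonempty (↥(S \ D0) ≃ ℕ) := by
    haveI := ((hSc.mono (Set.diff_subset (s := S) (t := D0))).to_subtype)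
    haveI := h1.to_subtype
    exact ⟨(nonempty_denumerable_iff.mpr ⟨inferInstance, inferInstance⟩).some.eqv⟩
  have e2 : Nonempty (↥(S' \ R0) ≃ ℕ) := by
    haveI := ((hS'c.mono (Set.diff_subset (s := S') (t := R0))).to_subtype)
    haveI := h2.to_subtype
    exact ⟨(nonempty_denumerable_iff.mpr ⟨inferInstance, inferInstance⟩).some.eqv⟩
  obtain ⟨q1⟩ := e1
  obtain ⟨q2⟩ := e2
  let q : ↥(S \ D0) ≃ ↥(S' \ R0) := q1.trans q2.symm
  let u : β → β := fun x => if hx : x ∈ D0 then p x else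
    if hx2 : x ∈ S \ D0 then (q ⟨x, hx2⟩ : β) else x
  let v : β → β := fun y => if hy : y ∈ R0 then Function.invFunOn p D0 y else
    if hy2 : y ∈ S' \ R0 then (q.symm ⟨y, hy2⟩ : β) else y
  refine ⟨u, v, ?_, ?_, ?_⟩
  · intro x hx
    by_cases hxD : x ∈ D0
    · have hux : u x = p x := dif_pos hxD
      have hpx : p x ∈ R0 := ⟨x, hxD, rfl⟩
      constructor
      · rw [hux]; exact hR0sub hpx
      · rw [hux]; show v (p x) = x
        have : v (p x) = Function.invFunOn p D0 (p x) := dif_pos hpx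
        rw [this]
        exact hinj.leftInvOn_invFunOn hxD
    · have hxSD : x ∈ S \ D0 := ⟨hx, hxD⟩
      have hux : u x = (q ⟨x, hxSD⟩ : β) := by
        show dite _ _ _ = _
        rw [dif_neg hxD, dif_pos hxSD]
      have hmem : (q ⟨x, hxSD⟩ : β) ∈ S' \ R0 := (q ⟨x, hxSD⟩).2
      constructor
      · rw [hux]; exact hmem.1
      · rw [hux]
        have h3 : v (q ⟨x, hxSD⟩ : β) = (q.symm ⟨(q ⟨x, hxSD⟩ : β), hmem⟩ : β) := by
          show dite _ _ _ = _
          rw [dif_neg hmem.2, dif_pos hmem]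
        rw [h3]
        have : (⟨(q ⟨x, hxSD⟩ : β), hmem⟩ : ↥(S' \ R0)) = q ⟨x, hxSD⟩ := rfl
        rw [this, Equiv.symm_apply_apply]
  · intro y hy
    by_cases hyR : y ∈ R0
    · have hvy : v y = Function.invFunOn p D0 y := dif_pos hyR
      obtain ⟨x, hxD, rfl⟩ := hyR
      have hiv : Function.invFunOn p D0 (p x) = x := hinj.leftInvOn_invFunOn hxD
      constructor
      · rw [hvy, hiv]; exact hxD.2
      · rw [hvy, hiv]
        show u x = p x
        exact dif_pos hxD
    · have hySR : y ∈ S' \ R0 := ⟨hy, hyR⟩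
      have hvy : v y = (q.symm ⟨y, hySR⟩ : β) := by
        show dite _ _ _ = _
        rw [dif_neg hyR, dif_pos hySR]
      have hmem : (q.symm ⟨y, hySR⟩ : β) ∈ S \ D0 := (q.symm ⟨y, hySR⟩).2
      constructor
      · rw [hvy]; exact hmem.1
      · rw [hvy]
        have h3 : u (q.symm ⟨y, hySR⟩ : β) = (q ⟨(q.symm ⟨y, hySR⟩ : β), hmem⟩ : β) := by
          show dite _ _ _ = _
          rw [dif_neg hmem.2, dif_pos hmem]
        rw [h3]
        have : (⟨(q.symm ⟨y, hySR⟩ : β), hmem⟩ : ↥(S \ D0)) = q.symm ⟨y, hySR⟩ := rfl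
        rw [this, Equiv.apply_symm_apply]
  · intro x hx
    exact dif_pos hx

/-- Lemma 5.40: one-step extension of a countable family of automorphisms which is
consistent with two tuples `c`, `d` above `b` for indices in `A`, and which moves
elements of `C = range c`, `D = range d`, and `Y` suitably out of the other sets. -/
theorem auto_family_extension_two_tuples
    (T : OmegaOneTree α) (γ : Ordinal) (hγ : γ < omega1)
    {ι : Type} [Countable ι] (f f' : ι → α → α)
    (hf : ∀ τ, IsTreeAuto T γ (f τ) (f' τ))
    (A B : Set ι) (hAB : A ⊆ B) (hAfin : A.Finite) (hBfin : B.Finite)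
    (n : ℕ) (b c d : Fin n → α)
    (hbinj : Function.Injective b) (hblev : ∀ k, T.height (b k) = γ)
    (hcdinj : Function.Injective (Sum.elim c d : Fin n ⊕ Fin n → α))
    (hclev : ∀ k, T.height (c k) = γ + 1) (hdlev : ∀ k, T.height (d k) = γ + 1)
    (hbc : ∀ k, b k < c k) (hbd : ∀ k, b k < d k)
    (Y : Set α) (hYfin : Y.Finite) (hYlev : ∀ x ∈ Y, T.height x = γ + 1)
    (hYdisj : (Set.range c ∪ Set.range d) ∩ Y = ∅) :
    ∃ g g' : ι → α → α,
      (∀ τ, IsTreeAuto T (γ + 1) (g τ) (g' τ)) ∧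
      (∀ τ, AutoExtends T γ (f τ) (f' τ) (g τ) (g' τ)) ∧
      (∀ τ ∈ A, AutoConsistentPair (g τ) b c ∧ AutoConsistentPair (g τ) b d) ∧
      (∀ x ∈ Set.range c,
        (∀ τ ∈ A, g τ x ∉ Y ∪ Set.range d ∧ g' τ x ∉ Y ∪ Set.range d) ∧
        (∀ τ ∈ B, τ ∉ A →
          g τ x ∉ Set.range c ∪ Set.range d ∪ Y ∧
          g' τ x ∉ Set.range c ∪ Set.range d ∪ Y)) ∧
      (∀ x ∈ Set.range d,
        (∀ τ ∈ A, g τ x ∉ Y ∪ Set.range c ∧ g' τ x ∉ Y ∪ Set.range c) ∧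
        (∀ τ ∈ B, τ ∉ A →
          g τ x ∉ Set.range c ∪ Set.range d ∪ Y ∧
          g' τ x ∉ Set.range c ∪ Set.range d ∪ Y)) ∧
      (∀ x ∈ Y, ∀ τ ∈ B,
        g τ x ∉ Set.range c ∪ Set.range d ∪ Y ∧
        g' τ x ∉ Set.range c ∪ Set.range d ∪ Y) := by
  classical
  -- ordinal basics
  have hlt1 : γ < γ + 1 := lt_add_one γ
  have hle1 : γ ≤ γ + 1 := le_of_lt hlt1
  have hnotle : ¬ (γ + 1 ≤ γ) := not_le.mpr hlt1
  have hsucc : ∀ {o : Ordinal}, o < γ + 1 ↔ o ≤ γ := by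
    intro o; rw [Ordinal.add_one_eq_succ, Order.lt_succ_iff]
  have hlesucc : ∀ {o : Ordinal}, o ≤ γ + 1 → o ≤ γ ∨ o = γ + 1 := by
    intro o h
    rcases lt_or_eq_of_le h with h | h
    · exact Or.inl (hsucc.mp h)
    · exact Or.inr h
  -- injectivity facts
  have hcinj : Function.Injective c := fun i j h =>
    Sum.inl_injective (hcdinj (show Sum.elim c d (Sum.inl i) = Sum.elim c d (Sum.inl j) from h))
  have hdinj : Function.Injective d := fun i j h =>
    Sum.inr_injective (hcdinj (show Sum.elim c d (Sum.inr i) = Sum.elim c d (Sum.inr j) from h))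
  have hcd : ∀ i j, c i ≠ d j := fun i j h => by
    have h2 := hcdinj (show Sum.elim c d (Sum.inl i) = Sum.elim c d (Sum.inr j) from h)
    simp at h2
  -- restriction of the tuples
  have hrc : ∀ k, T.restrict (c k) γ = b k := fun k => T.restrict_eq (le_of_lt (hbc k)) (hblev k)
  have hrd : ∀ k, T.restrict (d k) γ = b k := fun k => T.restrict_eq (le_of_lt (hbd k)) (hblev k)
  -- components of the automorphisms f
  have hfh : ∀ τ x, T.height x ≤ γ → T.height (f τ x) = T.height x := fun τ => (hf τ).1
  have hf'h : ∀ τ x, T.height x ≤ γ → T.height (f' τ x) = T.height x := fun τ => (hf τ).2.1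
  have hf'f : ∀ τ x, T.height x ≤ γ → f' τ (f τ x) = x := fun τ => (hf τ).2.2.1
  have hff' : ∀ τ x, T.height x ≤ γ → f τ (f' τ x) = x := fun τ => (hf τ).2.2.2.1
  have hfm : ∀ τ x y, T.height y ≤ γ → x < y → f τ x < f τ y := fun τ => (hf τ).2.2.2.2.1
  have hf'm : ∀ τ x y, T.height y ≤ γ → x < y → f' τ x < f' τ y := fun τ => (hf τ).2.2.2.2.2
  have hfinj : ∀ τ x y, T.height x ≤ γ → T.height y ≤ γ → f τ x = f τ y → x = y := by
    intro τ x y hx hy h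
    have h2 := congrArg (f' τ) h
    rwa [hf'f τ x hx, hf'f τ y hy] at h2
  -- restriction to level γ
  have hπ : ∀ x, T.height x = γ + 1 → T.height (T.restrict x γ) = γ := by
    intro x hx
    exact T.height_restrict x (by rw [hx]; exact hle1)
  have hfπ : ∀ τ x, T.height x = γ + 1 → T.height (f τ (T.restrict x γ)) = γ := by
    intro τ x hx
    rw [hfh τ _ (le_of_eq (hπ x hx)), hπ x hx]
  -- the finite set W and membership helpers
  have hcW : ∀ j, c j ∈ Set.range c ∪ Set.range d ∪ Y := fun j =>
    Set.mem_union_left Y (Set.mem_union_left _ (Set.mem_range_self j))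
  have hdW : ∀ j, d j ∈ Set.range c ∪ Set.range d ∪ Y := fun j =>
    Set.mem_union_left Y (Set.mem_union_right _ (Set.mem_range_self j))
  have hYW : ∀ x ∈ Y, x ∈ Set.range c ∪ Set.range d ∪ Y := fun x hx =>
    Set.mem_union_right _ hx
  have hYcd : ∀ x ∈ Set.range c ∪ Set.range d, x ∉ Y := by
    intro x hx hxY
    have h2 : x ∈ (Set.range c ∪ Set.range d) ∩ Y := ⟨hx, hxY⟩
    rw [hYdisj] at h2
    exact h2
  set W : Set α := Set.range c ∪ Set.range d ∪ Y with hWdef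
  have hWfin : W.Finite := ((Set.finite_range c).union (Set.finite_range d)).union hYfin
  have hWlev : ∀ x ∈ W, T.height x = γ + 1 := by
    rintro x ((⟨i, rfl⟩ | ⟨i, rfl⟩) | hx)
    exacts [hclev i, hdlev i, hYlev x hx]
  -- fibers over level γ
  have hFibc : ∀ z : α, (fib T γ z).Countable := fun z =>
    (T.level_countable (γ + 1)).mono (fun x hx => hx.1)
  have hFibi : ∀ z : α, T.height z = γ → (fib T γ z).Infinite := by
    intro z hz
    refine Set.Infinite.mono ?_ (T.splitting z)
    intro y hy
    exact ⟨by rw [hy.2, hz], T.restrict_eq (le_of_lt hy.1) hz⟩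
  have hFibdi : ∀ z : α, T.height z = γ → ((fib T γ z) \ W).Infinite := fun z hz =>
    (hFibi z hz).diff hWfin
  -- an abstract choice of "fresh" elements
  obtain ⟨freshAt, hfreshAt1, hfreshAt2⟩ :
      ∃ fa : α → ℕ → α,
        (∀ z, T.height z = γ → ∀ k, fa z k ∈ (fib T γ z) \ W) ∧
        (∀ z, T.height z = γ → ∀ k k', fa z k = fa z k' → k = k') := by
    refine ⟨fun z k => if h : T.height z = γ then (((hFibdi z h).natEmbedding) k).val else z,
      ?_, ?_⟩
    · intro z h k
      simp only [dif_pos h]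
      exact (((hFibdi z h).natEmbedding) k).2
    · intro z h k k' he
      simp only [dif_pos h] at he
      exact ((hFibdi z h).natEmbedding).injective (Subtype.coe_injective he)
  obtain ⟨num, hnum⟩ : ∃ nm : α → ℕ, Set.InjOn nm W :=
    Set.countable_iff_exists_injOn.mp hWfin.countable
  obtain ⟨fresh, hfresh, hfreshinj⟩ :
      ∃ fr : ι → α → α,
        (∀ τ, ∀ x ∈ W, fr τ x ∈ fib T γ (f τ (T.restrict x γ)) ∧ fr τ x ∉ W) ∧
        (∀ τ, Set.InjOn (fr τ) W) := by
    refine ⟨fun τ x => freshAt (f τ (T.restrict x γ)) (num x), ?_, ?_⟩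
    · intro τ x hx
      have h := hfreshAt1 _ (hfπ τ x (hWlev x hx)) (num x)
      exact ⟨h.1, h.2⟩
    · intro τ x hx x' hx' he
      simp only [] at he
      have h1 := hfreshAt1 _ (hfπ τ x (hWlev x hx)) (num x)
      have h1' := hfreshAt1 _ (hfπ τ x' (hWlev x' hx')) (num x')
      have hzz : f τ (T.restrict x γ) = f τ (T.restrict x' γ) := by
        rw [← h1.1.2, ← h1'.1.2, he]
      rw [hzz] at he
      exact hnum hx hx' (hfreshAt2 _ (hfπ τ x' (hWlev x' hx')) _ _ he)
  -- the prescription P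
  obtain ⟨P, hPc, hPd, hPchar⟩ :
      ∃ P : ι → α → α,
        (∀ τ i j, τ ∈ A → f τ (b i) = b j → P τ (c i) = c j) ∧
        (∀ τ i j, τ ∈ A → f τ (b i) = b j → P τ (d i) = d j) ∧
        (∀ τ x, (∃ i j, τ ∈ A ∧ x = c i ∧ f τ (b i) = b j ∧ P τ x = c j) ∨
                (∃ i j, τ ∈ A ∧ x = d i ∧ f τ (b i) = b j ∧ P τ x = d j) ∨
                P τ x = fresh τ x) := by
    refine ⟨fun τ x =>
      if hx : ∃ q : Fin n × Fin n, τ ∈ A ∧ x = c q.1 ∧ f τ (b q.1) = b q.2 then c hx.choose.2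
      else if hx : ∃ q : Fin n × Fin n, τ ∈ A ∧ x = d q.1 ∧ f τ (b q.1) = b q.2 then
        d hx.choose.2
      else fresh τ x, ?_, ?_, ?_⟩
    · intro τ i j hA' hfij
      have hex : ∃ q : Fin n × Fin n, τ ∈ A ∧ c i = c q.1 ∧ f τ (b q.1) = b q.2 :=
        ⟨(i, j), hA', rfl, hfij⟩
      simp only [dif_pos hex]
      obtain ⟨_, hc1, hc2⟩ := hex.choose_spec
      rw [(hcinj hc1).symm] at hc2
      rw [hbinj (hc2.symm.trans hfij)]
    · intro τ i j hA' hfij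
      have hne : ¬ ∃ q : Fin n × Fin n, τ ∈ A ∧ d i = c q.1 ∧ f τ (b q.1) = b q.2 := by
        rintro ⟨q, _, hq, _⟩
        exact hcd q.1 i hq.symm
      simp only [dif_neg hne]
      have hex : ∃ q : Fin n × Fin n, τ ∈ A ∧ d i = d q.1 ∧ f τ (b q.1) = b q.2 :=
        ⟨(i, j), hA', rfl, hfij⟩
      simp only [dif_pos hex]
      obtain ⟨_, hc1, hc2⟩ := hex.choose_spec
      rw [(hdinj hc1).symm] at hc2
      rw [hbinj (hc2.symm.trans hfij)]
    · intro τ x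
      by_cases h1 : ∃ q : Fin n × Fin n, τ ∈ A ∧ x = c q.1 ∧ f τ (b q.1) = b q.2
      · left
        obtain ⟨hA', hx, hfq⟩ := h1.choose_spec
        exact ⟨h1.choose.1, h1.choose.2, hA', hx, hfq, dif_pos h1⟩
      · by_cases h2 : ∃ q : Fin n × Fin n, τ ∈ A ∧ x = d q.1 ∧ f τ (b q.1) = b q.2
        · right; left
          obtain ⟨hA', hx, hfq⟩ := h2.choose_spec
          refine ⟨h2.choose.1, h2.choose.2, hA', hx, hfq, ?_⟩
          simp only [dif_neg h1, dif_pos h2]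
        · right; right
          simp only [dif_neg h1, dif_neg h2]
  have hPfiber : ∀ τ, ∀ x ∈ W, T.height (P τ x) = γ + 1 ∧
      T.restrict (P τ x) γ = f τ (T.restrict x γ) := by
    intro τ x hx
    rcases hPchar τ x with ⟨i, j, _, rfl, hfij, hPv⟩ | ⟨i, j, _, rfl, hfij, hPv⟩ | hPv
    · rw [hPv]
      exact ⟨hclev j, by rw [hrc j, hrc i, hfij]⟩
    · rw [hPv]
      exact ⟨hdlev j, by rw [hrd j, hrd i, hfij]⟩
    · rw [hPv]
      exact ⟨(hfresh τ x hx).1.1, (hfresh τ x hx).1.2⟩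
  have hPinj : ∀ τ, Set.InjOn (P τ) W := by
    intro τ x hx x' hx' he
    rcases hPchar τ x with ⟨i, j, _, hxe, hfij, hPv⟩ | ⟨i, j, _, hxe, hfij, hPv⟩ | hPv <;>
      rcases hPchar τ x' with ⟨i', j', _, hxe', hfij', hPv'⟩ | ⟨i', j', _, hxe', hfij', hPv'⟩ |
        hPv'
    · rw [hPv, hPv'] at he
      obtain rfl : j = j' := hcinj he
      obtain rfl : i = i' := hbinj (hfinj τ _ _ (le_of_eq (hblev i)) (le_of_eq (hblev i'))
        (hfij.trans hfij'.symm))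
      rw [hxe, hxe']
    · rw [hPv, hPv'] at he
      exact absurd he (hcd j j')
    · rw [hPv, hPv'] at he
      exact absurd (he ▸ hcW j) ((hfresh τ x' hx').2)
    · rw [hPv, hPv'] at he
      exact absurd he.symm (hcd j' j)
    · rw [hPv, hPv'] at he
      obtain rfl : j = j' := hdinj he
      obtain rfl : i = i' := hbinj (hfinj τ _ _ (le_of_eq (hblev i)) (le_of_eq (hblev i'))
        (hfij.trans hfij'.symm))
      rw [hxe, hxe']
    · rw [hPv, hPv'] at he
      exact absurd (he ▸ hdW j) ((hfresh τ x' hx').2)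
    · rw [hPv, hPv'] at he
      exact absurd (he.symm ▸ hcW j') ((hfresh τ x hx).2)
    · rw [hPv, hPv'] at he
      exact absurd (he.symm ▸ hdW j') ((hfresh τ x hx).2)
    · rw [hPv, hPv'] at he
      exact hfreshinj τ hx hx' he
  -- the fiberwise bijections
  have EX : ∀ (τ : ι) (z : α), ∃ uvp : (α → α) × (α → α), T.height z = γ →
      ((∀ x ∈ fib T γ z, uvp.1 x ∈ fib T γ (f τ z) ∧ uvp.2 (uvp.1 x) = x) ∧
       (∀ y ∈ fib T γ (f τ z), uvp.2 y ∈ fib T γ z ∧ uvp.1 (uvp.2 y) = y) ∧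
       (∀ x ∈ W ∩ fib T γ z, uvp.1 x = P τ x)) := by
    intro τ z
    by_cases hz : T.height z = γ
    · have hz' : T.height (f τ z) = γ := by rw [hfh τ z (le_of_eq hz), hz]
      have hmap : ∀ x ∈ W ∩ fib T γ z, P τ x ∈ fib T γ (f τ z) := by
        intro x hx
        have h4 := hPfiber τ x hx.1
        exact ⟨h4.1, by rw [h4.2, hx.2.2]⟩
      obtain ⟨u, v, h1, h2, h3⟩ := ext_bij (fib T γ z) (fib T γ (f τ z)) (hFibc z)
        (hFibi z hz) (hFibc _) (hFibi _ hz') (P τ) W hWfin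
        ((hPinj τ).mono Set.inter_subset_left) hmap
      exact ⟨(u, v), fun _ => ⟨h1, h2, h3⟩⟩
    · exact ⟨(id, id), fun h => absurd h hz⟩
  choose uv huv using EX
  have hu1 : ∀ τ z, T.height z = γ → ∀ x ∈ fib T γ z,
      (uv τ z).1 x ∈ fib T γ (f τ z) ∧ (uv τ z).2 ((uv τ z).1 x) = x :=
    fun τ z hz => (huv τ z hz).1
  have hu2 : ∀ τ z, T.height z = γ → ∀ y ∈ fib T γ (f τ z),
      (uv τ z).2 y ∈ fib T γ z ∧ (uv τ z).1 ((uv τ z).2 y) = y :=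
    fun τ z hz => (huv τ z hz).2.1
  have hu3 : ∀ τ z, T.height z = γ → ∀ x ∈ W ∩ fib T γ z, (uv τ z).1 x = P τ x :=
    fun τ z hz => (huv τ z hz).2.2
  -- the extended automorphisms
  obtain ⟨g, g', hglow, hg'low, hgmid, hg'mid⟩ :
      ∃ g g' : ι → α → α,
        (∀ τ x, T.height x ≤ γ → g τ x = f τ x) ∧
        (∀ τ x, T.height x ≤ γ → g' τ x = f' τ x) ∧
        (∀ τ x, T.height x = γ + 1 → g τ x = (uv τ (T.restrict x γ)).1 x) ∧
        (∀ τ x, T.height x = γ + 1 → g' τ x = (uv τ (f' τ (T.restrict x γ))).2 x) := by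
    refine ⟨fun τ x => if T.height x ≤ γ then f τ x else
        if T.height x = γ + 1 then (uv τ (T.restrict x γ)).1 x else x,
      fun τ x => if T.height x ≤ γ then f' τ x else
        if T.height x = γ + 1 then (uv τ (f' τ (T.restrict x γ))).2 x else x, ?_, ?_, ?_, ?_⟩
    · intro τ x hx; exact if_pos hx
    · intro τ x hx; exact if_pos hx
    · intro τ x hx; simp only [if_neg (show ¬ T.height x ≤ γ by rw [hx]; exact hnotle), if_pos hx]
    · intro τ x hx; simp only [if_neg (show ¬ T.height x ≤ γ by rw [hx]; exact hnotle), if_pos hx]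
  have hxFib : ∀ x, T.height x = γ + 1 → x ∈ fib T γ (T.restrict x γ) := fun x hx => ⟨hx, rfl⟩
  have hgmem : ∀ τ x, T.height x = γ + 1 → g τ x ∈ fib T γ (f τ (T.restrict x γ)) := by
    intro τ x hx
    rw [hgmid τ x hx]
    exact (hu1 τ _ (hπ x hx) x (hxFib x hx)).1
  have hg'g : ∀ τ x, T.height x = γ + 1 → g' τ (g τ x) = x := by
    intro τ x hx
    have hm := hgmem τ x hx
    rw [hg'mid τ _ hm.1, hm.2, hf'f τ _ (le_of_eq (hπ x hx)), hgmid τ x hx]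
    exact (hu1 τ _ (hπ x hx) x (hxFib x hx)).2
  have hg'mem : ∀ τ x, T.height x = γ + 1 →
      g' τ x ∈ fib T γ (f' τ (T.restrict x γ)) ∧ g τ (g' τ x) = x := by
    intro τ x hx
    have hzγ : T.height (f' τ (T.restrict x γ)) = γ := by
      rw [hf'h τ _ (le_of_eq (hπ x hx)), hπ x hx]
    have hxmem : x ∈ fib T γ (f τ (f' τ (T.restrict x γ))) := by
      rw [hff' τ _ (le_of_eq (hπ x hx))]
      exact hxFib x hx
    have h2 := hu2 τ _ hzγ x hxmem
    have hg'x : g' τ x = (uv τ (f' τ (T.restrict x γ))).2 x := hg'mid τ x hx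
    refine ⟨by rw [hg'x]; exact h2.1, ?_⟩
    rw [hg'x, hgmid τ _ h2.1.1, h2.1.2]
    exact h2.2
  have hgW : ∀ τ, ∀ x ∈ W, g τ x = P τ x := by
    intro τ x hx
    have hhx := hWlev x hx
    rw [hgmid τ x hhx]
    exact hu3 τ _ (hπ x hhx) x ⟨hx, hxFib x hhx⟩
  -- monotonicity helper
  have hmono : ∀ (F Gg : α → α),
      (∀ w, T.height w ≤ γ → T.height (F w) = T.height w) →
      (∀ x y, T.height y ≤ γ → x < y → F x < F y) →
      (∀ x, T.height x ≤ γ → Gg x = F x) →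
      (∀ x, T.height x = γ + 1 → Gg x ∈ fib T γ (F (T.restrict x γ))) →
      ∀ x y, T.height y ≤ γ + 1 → x < y → Gg x < Gg y := by
    intro F Gg hF1 hFm hlow hmem x y hy hxy
    rcases hlesucc hy with h | h
    · rw [hlow y h, hlow x (le_of_lt (lt_of_lt_of_le (T.height_strictMono hxy) h))]
      exact hFm x y h hxy
    · have hxle : T.height x ≤ γ := hsucc.mp (by rw [← h]; exact T.height_strictMono hxy)
      rw [hlow x hxle]
      have hmem' := hmem y h
      have hrlev : T.height (T.restrict y γ) = γ := hπ y h
      have hrley : T.restrict y γ ≤ y := T.restrict_le y (by rw [h]; exact hle1)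
      have hrlty : T.restrict y γ < y := by
        refine lt_of_le_of_ne hrley ?_
        intro he
        rw [he, h] at hrlev
        exact (ne_of_gt hlt1) hrlev
      have hxr : x ≤ T.restrict y γ := by
        rcases T.pred_linear hxy hrlty with h1 | h1
        · exact h1
        · rcases lt_or_eq_of_le h1 with h2 | h2
          · have h3 := T.height_strictMono h2
            rw [hrlev] at h3
            exact absurd hxle (not_le.mpr h3)
          · exact le_of_eq h2.symm
      have hFxr : F x ≤ F (T.restrict y γ) := by
        rcases lt_or_eq_of_le hxr with h2 | h2
        · exact le_of_lt (hFm x _ (le_of_eq hrlev) h2)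
        · rw [h2]
      have hFrG : F (T.restrict y γ) ≤ Gg y := by
        rw [← hmem'.2]
        exact T.restrict_le _ (by rw [hmem'.1]; exact hle1)
      refine lt_of_le_of_ne (le_trans hFxr hFrG) ?_
      intro he
      have h1 : T.height (F x) ≤ γ := by rw [hF1 x hxle]; exact hxle
      rw [he, hmem'.1] at h1
      exact hnotle h1
  have hGauto : ∀ τ, IsTreeAuto T (γ + 1) (g τ) (g' τ) := by
    intro τ
    refine ⟨?_, ?_, ?_, ?_, ?_, ?_⟩
    · intro x hx
      rcases hlesucc hx with h | h
      · rw [hglow τ x h]; exact hfh τ x h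
      · rw [h]; exact (hgmem τ x h).1
    · intro x hx
      rcases hlesucc hx with h | h
      · rw [hg'low τ x h]; exact hf'h τ x h
      · rw [h]; exact (hg'mem τ x h).1.1
    · intro x hx
      rcases hlesucc hx with h | h
      · rw [hglow τ x h, hg'low τ _ (by rw [hfh τ x h]; exact h)]
        exact hf'f τ x h
      · exact hg'g τ x h
    · intro x hx
      rcases hlesucc hx with h | h
      · rw [hg'low τ x h, hglow τ _ (by rw [hf'h τ x h]; exact h)]
        exact hff' τ x h
      · exact (hg'mem τ x h).2
    · exact hmono (f τ) (g τ) (hfh τ) (hfm τ) (hglow τ) (fun x hx => hgmem τ x hx)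
    · exact hmono (f' τ) (g' τ) (hf'h τ) (hf'm τ) (hg'low τ)
        (fun x hx => (hg'mem τ x hx).1)
  refine ⟨g, g', hGauto, fun τ => ⟨hglow τ, hg'low τ⟩, ?_, ?_, ?_, ?_⟩
  -- consistency
  · intro τ hA
    constructor
    · intro i j
      rw [hglow τ _ (le_of_eq (hblev i)), hgW τ (c i) (hcW i)]
      constructor
      · intro h
        exact hPc τ i j hA h
      · intro h
        rcases hPchar τ (c i) with ⟨i', j', _, hxe, hfij, hPv⟩ | ⟨i', j', _, hxe, hfij, hPv⟩ |
          hPv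
        · obtain rfl : i = i' := hcinj hxe
          obtain rfl : j' = j := hcinj (hPv.symm.trans h)
          exact hfij
        · exact absurd hxe (hcd i i')
        · rw [hPv] at h
          have h2 := (hfresh τ (c i) (hcW i)).2
          rw [h] at h2
          exact absurd (hcW j) h2
    · intro i j
      rw [hglow τ _ (le_of_eq (hblev i)), hgW τ (d i) (hdW i)]
      constructor
      · intro h
        exact hPd τ i j hA h
      · intro h
        rcases hPchar τ (d i) with ⟨i', j', _, hxe, hfij, hPv⟩ | ⟨i', j', _, hxe, hfij, hPv⟩ |
          hPv
        · exact absurd hxe.symm (hcd i' i)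
        · obtain rfl : i = i' := hdinj hxe
          obtain rfl : j' = j := hdinj (hPv.symm.trans h)
          exact hfij
        · rw [hPv] at h
          have h2 := (hfresh τ (d i) (hdW i)).2
          rw [h] at h2
          exact absurd (hdW j) h2
  -- constraints for C
  · rintro x ⟨i, rfl⟩
    constructor
    · intro τ hA
      constructor
      · rw [hgW τ _ (hcW i)]
        rcases hPchar τ (c i) with ⟨i', j', _, hxe, hfij, hPv⟩ | ⟨i', j', _, hxe, hfij, hPv⟩ |
          hPv
        · rw [hPv]
          rintro (hmem | hmem)
          · exact hYcd (c j') (Set.mem_union_left _ (Set.mem_range_self j')) hmem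
          · obtain ⟨k, hk⟩ := hmem
            exact hcd j' k hk.symm
        · exact absurd hxe (hcd i i')
        · rw [hPv]
          rintro (hmem | hmem)
          · exact (hfresh τ (c i) (hcW i)).2 (hYW _ hmem)
          · obtain ⟨k, hk⟩ := hmem
            exact (hfresh τ (c i) (hcW i)).2 (hk ▸ hdW k)
      · intro hmem
        have hwW : g' τ (c i) ∈ W := by
          rcases hmem with h | h
          · exact hYW _ h
          · obtain ⟨k, hk⟩ := h
            exact hk ▸ hdW k
        have hgw : g τ (g' τ (c i)) = c i := (hg'mem τ (c i) (hclev i)).2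
        rw [hgW τ _ hwW] at hgw
        rcases hPchar τ (g' τ (c i)) with ⟨i', j', _, hxe, hfij, hPv⟩ |
          ⟨i', j', _, hxe, hfij, hPv⟩ | hPv
        · rcases hmem with h | h
          · exact hYcd (g' τ (c i)) (hxe ▸ Set.mem_union_left _ (Set.mem_range_self i')) h
          · obtain ⟨k, hk⟩ := h
            exact hcd i' k (hxe.symm.trans hk.symm)
        · rw [hPv] at hgw
          exact hcd i j' hgw.symm
        · rw [hPv] at hgw
          have h2 := (hfresh τ _ hwW).2
          rw [hgw] at h2
          exact h2 (hcW i)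
    · intro τ hB hnA
      constructor
      · rw [hgW τ _ (hcW i)]
        rcases hPchar τ (c i) with ⟨i', j', hA', _, _, _⟩ | ⟨i', j', hA', _, _, _⟩ | hPv
        · exact absurd hA' hnA
        · exact absurd hA' hnA
        · rw [hPv]
          exact (hfresh τ (c i) (hcW i)).2
      · intro hmem
        have hgw : g τ (g' τ (c i)) = c i := (hg'mem τ (c i) (hclev i)).2
        rw [hgW τ _ hmem] at hgw
        rcases hPchar τ (g' τ (c i)) with ⟨_, _, hA', _, _, _⟩ | ⟨_, _, hA', _, _, _⟩ | hPv
        · exact absurd hA' hnA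
        · exact absurd hA' hnA
        · rw [hPv] at hgw
          have h2 := (hfresh τ _ hmem).2
          rw [hgw] at h2
          exact h2 (hcW i)
  -- constraints for D
  · rintro x ⟨i, rfl⟩
    constructor
    · intro τ hA
      constructor
      · rw [hgW τ _ (hdW i)]
        rcases hPchar τ (d i) with ⟨i', j', _, hxe, hfij, hPv⟩ | ⟨i', j', _, hxe, hfij, hPv⟩ |
          hPv
        · exact absurd hxe.symm (hcd i' i)
        · rw [hPv]
          rintro (hmem | hmem)
          · exact hYcd (d j') (Set.mem_union_right _ (Set.mem_range_self j')) hmem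
          · obtain ⟨k, hk⟩ := hmem
            exact hcd k j' hk
        · rw [hPv]
          rintro (hmem | hmem)
          · exact (hfresh τ (d i) (hdW i)).2 (hYW _ hmem)
          · obtain ⟨k, hk⟩ := hmem
            exact (hfresh τ (d i) (hdW i)).2 (hk ▸ hcW k)
      · intro hmem
        have hwW : g' τ (d i) ∈ W := by
          rcases hmem with h | h
          · exact hYW _ h
          · obtain ⟨k, hk⟩ := h
            exact hk ▸ hcW k
        have hgw : g τ (g' τ (d i)) = d i := (hg'mem τ (d i) (hdlev i)).2
        rw [hgW τ _ hwW] at hgw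
        rcases hPchar τ (g' τ (d i)) with ⟨i', j', _, hxe, hfij, hPv⟩ |
          ⟨i', j', _, hxe, hfij, hPv⟩ | hPv
        · rw [hPv] at hgw
          exact hcd j' i hgw
        · rcases hmem with h | h
          · exact hYcd (g' τ (d i)) (hxe ▸ Set.mem_union_right _ (Set.mem_range_self i')) h
          · obtain ⟨k, hk⟩ := h
            exact hcd k i' (hk.trans hxe)
        · rw [hPv] at hgw
          have h2 := (hfresh τ _ hwW).2
          rw [hgw] at h2
          exact h2 (hdW i)
    · intro τ hB hnA
      constructor
      · rw [hgW τ _ (hdW i)]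
        rcases hPchar τ (d i) with ⟨i', j', hA', _, _, _⟩ | ⟨i', j', hA', _, _, _⟩ | hPv
        · exact absurd hA' hnA
        · exact absurd hA' hnA
        · rw [hPv]
          exact (hfresh τ (d i) (hdW i)).2
      · intro hmem
        have hgw : g τ (g' τ (d i)) = d i := (hg'mem τ (d i) (hdlev i)).2
        rw [hgW τ _ hmem] at hgw
        rcases hPchar τ (g' τ (d i)) with ⟨_, _, hA', _, _, _⟩ | ⟨_, _, hA', _, _, _⟩ | hPv
        · exact absurd hA' hnA
        · exact absurd hA' hnA
        · rw [hPv] at hgw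
          have h2 := (hfresh τ _ hmem).2
          rw [hgw] at h2
          exact h2 (hdW i)
  -- constraints for Y
  · intro x hx τ hB
    have hxW : x ∈ W := hYW x hx
    constructor
    · rw [hgW τ x hxW]
      rcases hPchar τ x with ⟨i', j', _, hxe, _, hPv⟩ | ⟨i', j', _, hxe, _, hPv⟩ | hPv
      · exact absurd (hxe ▸ hx) (hYcd (c i') (Set.mem_union_left _ (Set.mem_range_self i')))
      · exact absurd (hxe ▸ hx) (hYcd (d i') (Set.mem_union_right _ (Set.mem_range_self i')))
      · rw [hPv]
        exact (hfresh τ x hxW).2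
    · intro hmem
      have hgw : g τ (g' τ x) = x := (hg'mem τ x (hYlev x hx)).2
      rw [hgW τ _ hmem] at hgw
      rcases hPchar τ (g' τ x) with ⟨i', j', _, _, _, hPv⟩ | ⟨i', j', _, _, _, hPv⟩ | hPv
      · rw [hPv] at hgw
        have h2 : c j' ∈ Y := by rw [hgw]; exact hx
        exact hYcd (c j') (Set.mem_union_left _ (Set.mem_range_self j')) h2
      · rw [hPv] at hgw
        have h2 : d j' ∈ Y := by rw [hgw]; exact hx
        exact hYcd (d j') (Set.mem_union_right _ (Set.mem_range_self j')) h2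
      · rw [hPv] at hgw
        have h2 := (hfresh τ _ hmem).2
        rw [hgw] at h2
        exact h2 (hxW)
end
end

section
/- Assume: γ < ω₁ and n < ω; X ⊆ T_{γ+1} is finite with unique drop-downs to γ; {f_τ : τ ∈ I} is a countable indexed family of automorphisms of T↾(γ+1); {I₀} ∪ {J_k : k < n} is a partition of I; A ⊆ I₀ and A_k ⊆ J_k for each k < n are finite; and for each k < n, {f_τ : τ ∈ A ∪ A_k} is separated on X↾γ. Then there exists an indexed family {g_τ : τ ∈ I} of automorphisms of T↾(γ+2) such that: (1) f_τ ⊆ g_τ for all τ ∈ I; (2) for all τ ∈ A ∪ ⋃_{k<n} A_k, X↾γ and X are g_τ-consistent; and (3) for each k < n, {g_τ : τ ∈ I₀ ∪ J_k} is separated. -/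
noncomputable section

variable {α : Type} [PartialOrder α]

namespace L541
set_option linter.unusedSectionVars false

variable {ι : Type}
variable (T : OmegaOneTree α) (γ : Ordinal) (f f' : ι → α → α) (X : Set α)
variable (F₀ : Set ((ι × α) × α)) (E : ℕ → Bool × ι × α)

/-- the level `γ+1` -/
def Lv : Set α := {y | T.height y = γ + 1}

/-- successors of `u` at level `γ+1` -/
def succSet (u : α) : Set α := {y | u < y ∧ T.height y = γ + 1}

def coords (S : Set ((ι × α) × α)) : Set α := {v | ∃ t ∈ S, v = t.1.2 ∨ v = t.2}

lemma mem_coords_left {S : Set ((ι × α) × α)} {τ : ι} {x y : α} (h : ((τ, x), y) ∈ S) :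
    x ∈ coords S := ⟨((τ, x), y), h, Or.inl rfl⟩

lemma mem_coords_right {S : Set ((ι × α) × α)} {τ : ι} {x y : α} (h : ((τ, x), y) ∈ S) :
    y ∈ coords S := ⟨((τ, x), y), h, Or.inr rfl⟩

lemma coords_mono {S S' : Set ((ι × α) × α)} (h : S ⊆ S') : coords S ⊆ coords S' :=
  fun _ ⟨t, ht, hv⟩ => ⟨t, h ht, hv⟩

lemma coords_finite {S : Set ((ι × α) × α)} (h : S.Finite) : (coords S).Finite := by
  refine Set.Finite.subset (h.biUnion (fun t _ => ((Set.finite_singleton t.2).insert t.1.2))) ?_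
  rintro v ⟨t, ht, h | h⟩ <;> exact Set.mem_biUnion ht (by simp [h])

lemma height_restrict_eq (x : α) (hx : x ∈ Lv T γ) : T.height (T.restrict x γ) = γ :=
  T.height_restrict x (by rw [show T.height x = γ + 1 from hx]; exact (lt_add_one γ).le)

lemma restrict_lt_self {x : α} (hx : x ∈ Lv T γ) : T.restrict x γ < x := by
  refine lt_of_le_of_ne (T.restrict_le x ?_) ?_
  · rw [show T.height x = γ + 1 from hx]; exact (lt_add_one γ).le
  · intro h
    have := height_restrict_eq T γ x hx
    rw [h, show T.height x = γ + 1 from hx] at this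
    exact absurd this.symm (lt_add_one γ).ne

lemma le_restrict_of_lt {x y : α} (hxy : x < y) (hx : T.height x ≤ γ) (hy : y ∈ Lv T γ) :
    x ≤ T.restrict y γ := by
  have hr : T.restrict y γ < y := restrict_lt_self T γ hy
  rcases T.pred_linear hxy hr with h | h
  · exact h
  · rcases eq_or_lt_of_le h with h' | h'
    · exact h'.ge
    · have := T.height_strictMono h'
      rw [height_restrict_eq T γ y hy] at this
      exact absurd hx (not_le.mpr this)

lemma succSet_infinite {u : α} (hu : T.height u = γ) : (succSet T γ u).Infinite := by
  have := T.splitting u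
  rw [hu] at this
  exact this

lemma mem_succSet_restrict {u y : α} (hu : T.height u = γ) (hy : y ∈ succSet T γ u) :
    T.restrict y γ = u := T.restrict_eq hy.1.le hu

lemma succSet_subset_Lv {u : α} : succSet T γ u ⊆ Lv T γ := fun _ hy => hy.2

lemma height_le_of_lv {x : α} (hx : x ∈ Lv T γ) : ¬ T.height x ≤ γ := by
  rw [show T.height x = γ + 1 from hx]
  exact not_le.mpr (lt_add_one γ)

lemma height_cases {x : α} (hx : T.height x ≤ γ + 1) : T.height x ≤ γ ∨ x ∈ Lv T γ := by
  rcases lt_or_eq_of_le hx with h | h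
  · left; rw [Ordinal.add_one_eq_succ, Order.lt_succ_iff] at h; exact h
  · right; exact h

open Classical in
/-- the (at most one) new triple added at step `n` on top of the partial assignment `S`. -/
noncomputable def newTri (n : ℕ) (S : Set ((ι × α) × α)) : Set ((ι × α) × α) :=
  if (E n).1 = true then
    if ((E n).2.2 ∈ Lv T γ ∧ ¬ ∃ y, (((E n).2.1, (E n).2.2), y) ∈ S) then
      if h : (succSet T γ (f (E n).2.1 (T.restrict (E n).2.2 γ)) \
          (X ∪ coords S ∪ {(E n).2.2})).Nonempty
      then {(((E n).2.1, (E n).2.2), h.some)} else ∅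
    else ∅
  else
    if ((E n).2.2 ∈ Lv T γ ∧ ¬ ∃ x, (((E n).2.1, x), (E n).2.2) ∈ S) then
      if h : (succSet T γ (f' (E n).2.1 (T.restrict (E n).2.2 γ)) \
          (X ∪ coords S ∪ {(E n).2.2})).Nonempty
      then {(((E n).2.1, h.some), (E n).2.2)} else ∅
    else ∅

lemma newTri_subsingleton {n : ℕ} {S : Set ((ι × α) × α)} :
    (newTri T γ f f' X E n S).Subsingleton := by
  unfold newTri
  split_ifs <;> first | exact Set.subsingleton_empty | exact Set.subsingleton_singleton

lemma mem_newTri {n : ℕ} {S : Set ((ι × α) × α)} {t : (ι × α) × α}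
    (ht : t ∈ newTri T γ f f' X E n S) :
    (∃ τ z y, t = ((τ, z), y) ∧ z ∈ Lv T γ ∧ (¬ ∃ y', ((τ, z), y') ∈ S) ∧
      y ∈ succSet T γ (f τ (T.restrict z γ)) ∧ y ∉ X ∧ y ∉ coords S ∧ y ≠ z) ∨
    (∃ τ x z, t = ((τ, x), z) ∧ z ∈ Lv T γ ∧ (¬ ∃ x', ((τ, x'), z) ∈ S) ∧
      x ∈ succSet T γ (f' τ (T.restrict z γ)) ∧ x ∉ X ∧ x ∉ coords S ∧ x ≠ z) := by
  unfold newTri at ht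
  split_ifs at ht with h1 h2 h3 h4 h5
  · rw [Set.mem_singleton_iff] at ht
    have hs := h3.some_mem
    simp only [Set.mem_diff, Set.mem_union, Set.mem_singleton_iff, not_or] at hs
    exact Or.inl ⟨_, _, _, ht, h2.1, h2.2, hs.1, hs.2.1.1, hs.2.1.2, hs.2.2⟩
  · exact absurd ht (Set.notMem_empty t)
  · exact absurd ht (Set.notMem_empty t)
  · rw [Set.mem_singleton_iff] at ht
    have hs := h5.some_mem
    simp only [Set.mem_diff, Set.mem_union, Set.mem_singleton_iff, not_or] at hs
    exact Or.inr ⟨_, _, _, ht, h4.1, h4.2, hs.1, hs.2.1.1, hs.2.1.2, hs.2.2⟩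
  · exact absurd ht (Set.notMem_empty t)
  · exact absurd ht (Set.notMem_empty t)

noncomputable def Rn : ℕ → Set ((ι × α) × α)
  | 0 => F₀
  | n + 1 => Rn n ∪ newTri T γ f f' X E n (Rn n)

lemma Rn_succ_sub (n : ℕ) : Rn T γ f f' X F₀ E n ⊆ Rn T γ f f' X F₀ E (n + 1) :=
  Set.subset_union_left

lemma Rn_mono {m n : ℕ} (h : m ≤ n) : Rn T γ f f' X F₀ E m ⊆ Rn T γ f f' X F₀ E n := by
  induction n with
  | zero => rw [Nat.le_zero.mp h]
  | succ n ih =>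
    rcases Nat.le_succ_iff.mp h with h' | h'
    · exact (ih h').trans (Rn_succ_sub T γ f f' X F₀ E n)
    · rw [h']

lemma mem_Rn_succ {n : ℕ} {t : (ι × α) × α} (h : t ∈ Rn T γ f f' X F₀ E (n + 1))
    (h2 : t ∉ Rn T γ f f' X F₀ E n) : t ∈ newTri T γ f f' X E n (Rn T γ f f' X F₀ E n) := by
  rcases h with h | h
  · exact absurd h h2
  · exact h

/-- the `Rinf` relation: union of all stages. -/
def Rinf : Set ((ι × α) × α) := ⋃ n, Rn T γ f f' X F₀ E n

lemma Rn_subset_Rinf (n : ℕ) : Rn T γ f f' X F₀ E n ⊆ Rinf T γ f f' X F₀ E :=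
  Set.subset_iUnion _ n

lemma F₀_subset_Rinf : F₀ ⊆ Rinf T γ f f' X F₀ E := Rn_subset_Rinf T γ f f' X F₀ E 0

lemma mem_Rinf_cases {t : (ι × α) × α} (ht : t ∈ Rinf T γ f f' X F₀ E) :
    t ∈ F₀ ∨ ∃ n, t ∈ Rn T γ f f' X F₀ E (n + 1) ∧ t ∉ Rn T γ f f' X F₀ E n := by
  classical
  obtain ⟨m, hm⟩ := Set.mem_iUnion.mp ht
  by_cases h0 : t ∈ F₀
  · exact Or.inl h0
  · right
    have hex : ∃ n, t ∈ Rn T γ f f' X F₀ E n := ⟨m, hm⟩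
    have hne : Nat.find hex ≠ 0 := by
      intro h
      have := Nat.find_spec hex
      rw [h] at this
      exact h0 this
    obtain ⟨n, hn⟩ := Nat.exists_eq_succ_of_ne_zero hne
    refine ⟨n, ?_, ?_⟩
    · have := Nat.find_spec hex; rwa [hn] at this
    · exact Nat.find_min hex (by omega)

lemma fresh_side {n : ℕ} {t : (ι × α) × α} (h : t ∈ Rn T γ f f' X F₀ E (n + 1))
    (h2 : t ∉ Rn T γ f f' X F₀ E n) :
    t.1.2 ≠ t.2 ∧
      ((t.1.2 ∉ X ∧ t.1.2 ∉ coords (Rn T γ f f' X F₀ E n)) ∨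
        (t.2 ∉ X ∧ t.2 ∉ coords (Rn T γ f f' X F₀ E n))) := by
  have := mem_newTri T γ f f' X E (mem_Rn_succ T γ f f' X F₀ E h h2)
  rcases this with ⟨τ, z, y, rfl, _, _, _, hyX, hyc, hyz⟩ | ⟨τ, x, z, rfl, _, _, _, hxX, hxc, hxz⟩
  · exact ⟨fun h => hyz h.symm, Or.inr ⟨hyX, hyc⟩⟩
  · exact ⟨hxz, Or.inl ⟨hxX, hxc⟩⟩

/-- well-formedness of a triple: both nodes on level `γ+1` and the `f`-relation
between the drop-downs. -/
def TriOK (t : (ι × α) × α) : Prop :=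
  t.1.2 ∈ Lv T γ ∧ t.2 ∈ Lv T γ ∧ f t.1.1 (T.restrict t.1.2 γ) = T.restrict t.2 γ

section Invariants

lemma newTri_triOK (hf : ∀ τ, IsTreeAuto T γ (f τ) (f' τ)) {n : ℕ} {S : Set ((ι × α) × α)} {t : (ι × α) × α}
    (ht : t ∈ newTri T γ f f' X E n S) : TriOK T γ f t := by
  rcases mem_newTri T γ f f' X E ht with
    ⟨τ, z, y, rfl, hz, _, hy, _, _, _⟩ | ⟨τ, x, z, rfl, hz, _, hx, _, _, _⟩
  · have hfz : T.height (f τ (T.restrict z γ)) = γ := by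
      rw [(hf τ).1 _ (by rw [height_restrict_eq T γ z hz])]
      exact height_restrict_eq T γ z hz
    exact ⟨hz, succSet_subset_Lv T γ hy, (mem_succSet_restrict T γ hfz hy).symm⟩
  · have hfz : T.height (f' τ (T.restrict z γ)) = γ := by
      rw [(hf τ).2.1 _ (by rw [height_restrict_eq T γ z hz])]
      exact height_restrict_eq T γ z hz
    refine ⟨succSet_subset_Lv T γ hx, hz, ?_⟩
    rw [mem_succSet_restrict T γ hfz hx]
    exact (hf τ).2.2.2.1 _ (by rw [height_restrict_eq T γ z hz])

lemma Rn_triOK (hf : ∀ τ, IsTreeAuto T γ (f τ) (f' τ))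
    (hF₀OK : ∀ t ∈ F₀, TriOK T γ f t) : ∀ n, ∀ t ∈ Rn T γ f f' X F₀ E n, TriOK T γ f t := by
  intro n
  induction n with
  | zero => exact hF₀OK
  | succ n ih =>
    rintro t (ht | ht)
    · exact ih t ht
    · exact newTri_triOK T γ f f' X E hf ht

lemma Rinf_triOK (hf : ∀ τ, IsTreeAuto T γ (f τ) (f' τ))
    (hF₀OK : ∀ t ∈ F₀, TriOK T γ f t) {t : (ι × α) × α} (ht : t ∈ Rinf T γ f f' X F₀ E) : TriOK T γ f t := by
  obtain ⟨n, hn⟩ := Set.mem_iUnion.mp ht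
  exact Rn_triOK T γ f f' X F₀ E hf hF₀OK n t hn

lemma Rn_coords_finite (hF₀X : coords F₀ ⊆ X) (hXfin : X.Finite) : ∀ n, (coords (Rn T γ f f' X F₀ E n)).Finite := by
  intro n
  induction n with
  | zero => exact hXfin.subset hF₀X
  | succ n ih =>
    have h1 : coords (Rn T γ f f' X F₀ E (n + 1)) ⊆
        coords (Rn T γ f f' X F₀ E n) ∪ coords (newTri T γ f f' X E n (Rn T γ f f' X F₀ E n)) := by
      rintro v ⟨t, (ht | ht), hv⟩
      · exact Or.inl ⟨t, ht, hv⟩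
      · exact Or.inr ⟨t, ht, hv⟩
    exact (ih.union (coords_finite ((newTri_subsingleton T γ f f' X E).finite))).subset h1

lemma Rn_funl : ∀ n, ∀ {τ : ι} {x y₁ y₂ : α}, ((τ, x), y₁) ∈ Rn T γ f f' X F₀ E n →
    ((τ, x), y₂) ∈ Rn T γ f f' X F₀ E n →
    (∀ {τ' : ι} {a b₁ b₂ : α}, ((τ', a), b₁) ∈ F₀ → ((τ', a), b₂) ∈ F₀ → b₁ = b₂) → y₁ = y₂ := by
  intro n
  induction n with
  | zero => intro τ x y₁ y₂ h1 h2 hF; exact hF h1 h2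
  | succ n ih =>
    intro τ x y₁ y₂ h1 h2 hF
    rcases h1 with h1 | h1 <;> rcases h2 with h2 | h2
    · exact ih h1 h2 hF
    · rcases mem_newTri T γ f f' X E h2 with
        ⟨τ', z, y, heq, _, hno, _, _, _, _⟩ | ⟨τ', a, z, heq, _, _, _, _, hac, _⟩
      · obtain ⟨h1', h2', h3'⟩ : τ = τ' ∧ x = z ∧ y₂ = y := by
          constructor
          · exact congrArg (fun t => t.1.1) heq
          · exact ⟨congrArg (fun t => t.1.2) heq, congrArg (fun t => t.2) heq⟩
        subst h1'; subst h2'; subst h3'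
        exact absurd ⟨y₁, h1⟩ hno
      · obtain ⟨h1', h2', h3'⟩ : τ = τ' ∧ x = a ∧ y₂ = z := by
          constructor
          · exact congrArg (fun t => t.1.1) heq
          · exact ⟨congrArg (fun t => t.1.2) heq, congrArg (fun t => t.2) heq⟩
        subst h2'
        exact absurd (mem_coords_left h1) hac
    · rcases mem_newTri T γ f f' X E h1 with
        ⟨τ', z, y, heq, _, hno, _, _, _, _⟩ | ⟨τ', a, z, heq, _, _, _, _, hac, _⟩
      · obtain ⟨h1', h2', h3'⟩ : τ = τ' ∧ x = z ∧ y₁ = y := by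
          constructor
          · exact congrArg (fun t => t.1.1) heq
          · exact ⟨congrArg (fun t => t.1.2) heq, congrArg (fun t => t.2) heq⟩
        subst h1'; subst h2'; subst h3'
        exact absurd ⟨y₂, h2⟩ hno
      · obtain ⟨h1', h2', h3'⟩ : τ = τ' ∧ x = a ∧ y₁ = z := by
          constructor
          · exact congrArg (fun t => t.1.1) heq
          · exact ⟨congrArg (fun t => t.1.2) heq, congrArg (fun t => t.2) heq⟩
        subst h2'
        exact absurd (mem_coords_left h2) hac
    · exact congrArg (fun t => t.2)
        (newTri_subsingleton T γ f f' X E h1 h2 :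
          (((τ, x), y₁) : (ι × α) × α) = ((τ, x), y₂))

lemma Rn_cofunl : ∀ n, ∀ {τ : ι} {x₁ x₂ y : α}, ((τ, x₁), y) ∈ Rn T γ f f' X F₀ E n →
    ((τ, x₂), y) ∈ Rn T γ f f' X F₀ E n →
    (∀ {τ' : ι} {a₁ a₂ b : α}, ((τ', a₁), b) ∈ F₀ → ((τ', a₂), b) ∈ F₀ → a₁ = a₂) → x₁ = x₂ := by
  intro n
  induction n with
  | zero => intro τ x₁ x₂ y h1 h2 hF; exact hF h1 h2
  | succ n ih =>
    intro τ x₁ x₂ y h1 h2 hF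
    rcases h1 with h1 | h1 <;> rcases h2 with h2 | h2
    · exact ih h1 h2 hF
    · rcases mem_newTri T γ f f' X E h2 with
        ⟨τ', z, y', heq, _, _, _, _, hyc, _⟩ | ⟨τ', a, z, heq, _, hno, _, _, _, _⟩
      · have h3' : y = y' := congrArg (fun t => t.2) heq
        subst h3'
        exact absurd (mem_coords_right h1) hyc
      · obtain ⟨h1', h3'⟩ : τ = τ' ∧ y = z :=
          ⟨congrArg (fun t => t.1.1) heq, congrArg (fun t => t.2) heq⟩
        subst h1'; subst h3'
        exact absurd ⟨x₁, h1⟩ hno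
    · rcases mem_newTri T γ f f' X E h1 with
        ⟨τ', z, y', heq, _, _, _, _, hyc, _⟩ | ⟨τ', a, z, heq, _, hno, _, _, _, _⟩
      · have h3' : y = y' := congrArg (fun t => t.2) heq
        subst h3'
        exact absurd (mem_coords_right h2) hyc
      · obtain ⟨h1', h3'⟩ : τ = τ' ∧ y = z :=
          ⟨congrArg (fun t => t.1.1) heq, congrArg (fun t => t.2) heq⟩
        subst h1'; subst h3'
        exact absurd ⟨x₂, h2⟩ hno
    · exact congrArg (fun t => t.1.2)
        (newTri_subsingleton T γ f f' X E h1 h2 :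
          (((τ, x₁), y) : (ι × α) × α) = ((τ, x₂), y))

lemma Rinf_funl (hF : ∀ {τ' : ι} {a b₁ b₂ : α}, ((τ', a), b₁) ∈ F₀ → ((τ', a), b₂) ∈ F₀ → b₁ = b₂)
    {τ : ι} {x y₁ y₂ : α} (h1 : ((τ, x), y₁) ∈ Rinf T γ f f' X F₀ E)
    (h2 : ((τ, x), y₂) ∈ Rinf T γ f f' X F₀ E) : y₁ = y₂ := by
  obtain ⟨n₁, hn₁⟩ := Set.mem_iUnion.mp h1
  obtain ⟨n₂, hn₂⟩ := Set.mem_iUnion.mp h2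
  exact Rn_funl T γ f f' X F₀ E (max n₁ n₂)
    (Rn_mono T γ f f' X F₀ E (le_max_left n₁ n₂) hn₁)
    (Rn_mono T γ f f' X F₀ E (le_max_right n₁ n₂) hn₂) hF

lemma Rinf_cofunl
    (hF : ∀ {τ' : ι} {a₁ a₂ b : α}, ((τ', a₁), b) ∈ F₀ → ((τ', a₂), b) ∈ F₀ → a₁ = a₂)
    {τ : ι} {x₁ x₂ y : α} (h1 : ((τ, x₁), y) ∈ Rinf T γ f f' X F₀ E)
    (h2 : ((τ, x₂), y) ∈ Rinf T γ f f' X F₀ E) : x₁ = x₂ := by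
  obtain ⟨n₁, hn₁⟩ := Set.mem_iUnion.mp h1
  obtain ⟨n₂, hn₂⟩ := Set.mem_iUnion.mp h2
  exact Rn_cofunl T γ f f' X F₀ E (max n₁ n₂)
    (Rn_mono T γ f f' X F₀ E (le_max_left n₁ n₂) hn₁)
    (Rn_mono T γ f f' X F₀ E (le_max_right n₁ n₂) hn₂) hF

lemma exists_fwd (hf : ∀ τ, IsTreeAuto T γ (f τ) (f' τ)) (hF₀X : coords F₀ ⊆ X)
    (hXfin : X.Finite) (hE : ∀ (b : Bool) (τ : ι) (x : α), x ∈ Lv T γ → ∃ n, E n = (b, τ, x))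
    (τ : ι) (z : α) (hz : z ∈ Lv T γ) : ∃ y, ((τ, z), y) ∈ Rinf T γ f f' X F₀ E := by
  classical
  obtain ⟨n, hn⟩ := hE true τ z hz
  by_cases hex : ∃ y, ((τ, z), y) ∈ Rn T γ f f' X F₀ E n
  · obtain ⟨y, hy⟩ := hex
    exact ⟨y, Rn_subset_Rinf T γ f f' X F₀ E n hy⟩
  · have hinf : (succSet T γ (f τ (T.restrict z γ))).Infinite := by
      apply succSet_infinite
      rw [(hf τ).1 _ (by rw [height_restrict_eq T γ z hz])]
      exact height_restrict_eq T γ z hz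
    have hC : (succSet T γ (f τ (T.restrict z γ)) \
        (X ∪ coords (Rn T γ f f' X F₀ E n) ∪ {z})).Nonempty :=
      (hinf.diff (((hXfin.union (Rn_coords_finite T γ f f' X F₀ E hF₀X hXfin n))).union
        (Set.finite_singleton z))).nonempty
    refine ⟨hC.some, Rn_subset_Rinf T γ f f' X F₀ E (n + 1) (Or.inr ?_)⟩
    unfold newTri
    simp only [hn]
    rw [if_pos (⟨hz, hex⟩ : z ∈ Lv T γ ∧ ¬∃ y, ((τ, z), y) ∈ Rn T γ f f' X F₀ E n),
      dif_pos hC]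
    exact rfl

lemma exists_bwd (hf : ∀ τ, IsTreeAuto T γ (f τ) (f' τ)) (hF₀X : coords F₀ ⊆ X)
    (hXfin : X.Finite) (hE : ∀ (b : Bool) (τ : ι) (x : α), x ∈ Lv T γ → ∃ n, E n = (b, τ, x))
    (τ : ι) (z : α) (hz : z ∈ Lv T γ) : ∃ x, ((τ, x), z) ∈ Rinf T γ f f' X F₀ E := by
  classical
  obtain ⟨n, hn⟩ := hE false τ z hz
  by_cases hex : ∃ x, ((τ, x), z) ∈ Rn T γ f f' X F₀ E n
  · obtain ⟨x, hx⟩ := hex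
    exact ⟨x, Rn_subset_Rinf T γ f f' X F₀ E n hx⟩
  · have hinf : (succSet T γ (f' τ (T.restrict z γ))).Infinite := by
      apply succSet_infinite
      rw [(hf τ).2.1 _ (by rw [height_restrict_eq T γ z hz])]
      exact height_restrict_eq T γ z hz
    have hC : (succSet T γ (f' τ (T.restrict z γ)) \
        (X ∪ coords (Rn T γ f f' X F₀ E n) ∪ {z})).Nonempty :=
      (hinf.diff (((hXfin.union (Rn_coords_finite T γ f f' X F₀ E hF₀X hXfin n))).union
        (Set.finite_singleton z))).nonempty
    refine ⟨hC.some, Rn_subset_Rinf T γ f f' X F₀ E (n + 1) (Or.inr ?_)⟩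
    unfold newTri
    simp only [hn]
    rw [if_neg (by simp : ¬((false : Bool) = true)),
      if_pos (⟨hz, hex⟩ : z ∈ Lv T γ ∧ ¬∃ x, ((τ, x), z) ∈ Rn T γ f f' X F₀ E n),
      dif_pos hC]
    exact rfl

open Classical in
/-- the extended automorphism -/
noncomputable def gg (τ : ι) (x : α) : α :=
  if T.height x ≤ γ then f τ x
  else if h : ∃ y, ((τ, x), y) ∈ Rinf T γ f f' X F₀ E then h.choose else x

open Classical in
/-- the inverse of the extended automorphism -/
noncomputable def gg' (τ : ι) (y : α) : α :=
  if T.height y ≤ γ then f' τ y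
  else if h : ∃ x, ((τ, x), y) ∈ Rinf T γ f f' X F₀ E then h.choose else y

lemma gg_low {τ : ι} {x : α} (h : T.height x ≤ γ) : gg T γ f f' X F₀ E τ x = f τ x :=
  if_pos h

lemma gg'_low {τ : ι} {x : α} (h : T.height x ≤ γ) : gg' T γ f f' X F₀ E τ x = f' τ x :=
  if_pos h

lemma gg_mem (hf : ∀ τ, IsTreeAuto T γ (f τ) (f' τ)) (hF₀X : coords F₀ ⊆ X)
    (hXfin : X.Finite) (hE : ∀ (b : Bool) (τ : ι) (x : α), x ∈ Lv T γ → ∃ n, E n = (b, τ, x))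
    {τ : ι} {x : α} (hx : x ∈ Lv T γ) :
    ((τ, x), gg T γ f f' X F₀ E τ x) ∈ Rinf T γ f f' X F₀ E := by
  classical
  have hex := exists_fwd T γ f f' X F₀ E hf hF₀X hXfin hE τ x hx
  have : gg T γ f f' X F₀ E τ x = hex.choose := by
    unfold gg
    rw [if_neg (height_le_of_lv T γ hx), dif_pos hex]
  rw [this]
  exact hex.choose_spec

lemma gg'_mem (hf : ∀ τ, IsTreeAuto T γ (f τ) (f' τ)) (hF₀X : coords F₀ ⊆ X)
    (hXfin : X.Finite) (hE : ∀ (b : Bool) (τ : ι) (x : α), x ∈ Lv T γ → ∃ n, E n = (b, τ, x))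
    {τ : ι} {y : α} (hy : y ∈ Lv T γ) :
    ((τ, gg' T γ f f' X F₀ E τ y), y) ∈ Rinf T γ f f' X F₀ E := by
  classical
  have hex := exists_bwd T γ f f' X F₀ E hf hF₀X hXfin hE τ y hy
  have : gg' T γ f f' X F₀ E τ y = hex.choose := by
    unfold gg'
    rw [if_neg (height_le_of_lv T γ hy), dif_pos hex]
  rw [this]
  exact hex.choose_spec

end Invariants

section Main

lemma gg_eq_of_mem (hf : ∀ τ, IsTreeAuto T γ (f τ) (f' τ)) (hF₀X : coords F₀ ⊆ X)
    (hXfin : X.Finite)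
    (hE : ∀ (b : Bool) (τ : ι) (x : α), x ∈ Lv T γ → ∃ n, E n = (b, τ, x))
    (hF₀fun : ∀ {τ' : ι} {a b₁ b₂ : α},
      ((τ', a), b₁) ∈ F₀ → ((τ', a), b₂) ∈ F₀ → b₁ = b₂)
    {τ : ι} {x y : α} (hm : ((τ, x), y) ∈ Rinf T γ f f' X F₀ E) (hx : x ∈ Lv T γ) :
    gg T γ f f' X F₀ E τ x = y :=
  Rinf_funl T γ f f' X F₀ E hF₀fun (gg_mem T γ f f' X F₀ E hf hF₀X hXfin hE hx) hm

lemma gg'_eq_of_mem (hf : ∀ τ, IsTreeAuto T γ (f τ) (f' τ)) (hF₀X : coords F₀ ⊆ X)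
    (hXfin : X.Finite)
    (hE : ∀ (b : Bool) (τ : ι) (x : α), x ∈ Lv T γ → ∃ n, E n = (b, τ, x))
    (hF₀cofun : ∀ {τ' : ι} {a₁ a₂ b : α},
      ((τ', a₁), b) ∈ F₀ → ((τ', a₂), b) ∈ F₀ → a₁ = a₂)
    {τ : ι} {x y : α} (hm : ((τ, x), y) ∈ Rinf T γ f f' X F₀ E) (hy : y ∈ Lv T γ) :
    gg' T γ f f' X F₀ E τ y = x :=
  Rinf_cofunl T γ f f' X F₀ E hF₀cofun (gg'_mem T γ f f' X F₀ E hf hF₀X hXfin hE hy) hm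

lemma gg_auto (hf : ∀ τ, IsTreeAuto T γ (f τ) (f' τ))
    (hF₀OK : ∀ t ∈ F₀, TriOK T γ f t)
    (hF₀X : coords F₀ ⊆ X)
    (hXfin : X.Finite)
    (hE : ∀ (b : Bool) (τ : ι) (x : α), x ∈ Lv T γ → ∃ n, E n = (b, τ, x))
    (hF₀fun : ∀ {τ' : ι} {a b₁ b₂ : α}, ((τ', a), b₁) ∈ F₀ → ((τ', a), b₂) ∈ F₀ → b₁ = b₂)
    (hF₀cofun : ∀ {τ' : ι} {a₁ a₂ b : α}, ((τ', a₁), b) ∈ F₀ → ((τ', a₂), b) ∈ F₀ → a₁ = a₂)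
    (τ : ι) :
    IsTreeAuto T (γ + 1) (gg T γ f f' X F₀ E τ) (gg' T γ f f' X F₀ E τ) := by
  obtain ⟨hfh, hf'h, hf'f, hff', hfm, hf'm⟩ := hf τ
  have hgm : ∀ {x : α}, x ∈ Lv T γ → ((τ, x), gg T γ f f' X F₀ E τ x) ∈ Rinf T γ f f' X F₀ E :=
    fun hx => gg_mem T γ f f' X F₀ E hf hF₀X hXfin hE hx
  have hg'm : ∀ {y : α}, y ∈ Lv T γ →
      ((τ, gg' T γ f f' X F₀ E τ y), y) ∈ Rinf T γ f f' X F₀ E :=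
    fun hy => gg'_mem T γ f f' X F₀ E hf hF₀X hXfin hE hy
  have hOK : ∀ {t : (ι × α) × α}, t ∈ Rinf T γ f f' X F₀ E → TriOK T γ f t :=
    fun ht => Rinf_triOK T γ f f' X F₀ E hf hF₀OK ht
  refine ⟨?_, ?_, ?_, ?_, ?_, ?_⟩
  · intro x hx
    rcases height_cases T γ hx with h | h
    · rw [gg_low T γ f f' X F₀ E h]; exact hfh x h
    · rw [show T.height x = γ + 1 from h]
      exact (hOK (hgm h)).2.1
  · intro x hx
    rcases height_cases T γ hx with h | h
    · rw [gg'_low T γ f f' X F₀ E h]; exact hf'h x h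
    · rw [show T.height x = γ + 1 from h]
      exact (hOK (hg'm h)).1
  · intro x hx
    rcases height_cases T γ hx with h | h
    · rw [gg_low T γ f f' X F₀ E h, gg'_low T γ f f' X F₀ E (by rw [hfh x h]; exact h)]
      exact hf'f x h
    · exact gg'_eq_of_mem T γ f f' X F₀ E hf hF₀X hXfin hE hF₀cofun (hgm h)
        ((hOK (hgm h)).2.1)
  · intro x hx
    rcases height_cases T γ hx with h | h
    · rw [gg'_low T γ f f' X F₀ E h, gg_low T γ f f' X F₀ E (by rw [hf'h x h]; exact h)]
      exact hff' x h
    · exact gg_eq_of_mem T γ f f' X F₀ E hf hF₀X hXfin hE hF₀fun (hg'm h)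
        ((hOK (hg'm h)).1)
  · intro x y hy hxy
    rcases height_cases T γ hy with h | h
    · have hx : T.height x ≤ γ := ((T.height_strictMono hxy).trans_le h).le
      rw [gg_low T γ f f' X F₀ E h, gg_low T γ f f' X F₀ E hx]
      exact hfm x y h hxy
    · have hx : T.height x ≤ γ := by
        have := T.height_strictMono hxy
        rw [show T.height y = γ + 1 from h, Ordinal.add_one_eq_succ, Order.lt_succ_iff] at this
        exact this
      rw [gg_low T γ f f' X F₀ E hx]
      have hmem := hgm h
      have hOKy := hOK hmem
      have hfr : f τ (T.restrict y γ) < gg T γ f f' X F₀ E τ y := by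
        rw [hOKy.2.2]
        exact restrict_lt_self T γ hOKy.2.1
      have hxr : x ≤ T.restrict y γ := le_restrict_of_lt T γ hxy hx h
      rcases eq_or_lt_of_le hxr with h' | h'
      · rw [h']; exact hfr
      · exact lt_trans (hfm _ _ (by rw [height_restrict_eq T γ y h]) h') hfr
  · intro x y hy hxy
    rcases height_cases T γ hy with h | h
    · have hx : T.height x ≤ γ := ((T.height_strictMono hxy).trans_le h).le
      rw [gg'_low T γ f f' X F₀ E h, gg'_low T γ f f' X F₀ E hx]
      exact hf'm x y h hxy
    · have hx : T.height x ≤ γ := by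
        have := T.height_strictMono hxy
        rw [show T.height y = γ + 1 from h, Ordinal.add_one_eq_succ, Order.lt_succ_iff] at this
        exact this
      rw [gg'_low T γ f f' X F₀ E hx]
      have hmem := hg'm h
      have hOKy := hOK hmem
      have hrr : f' τ (T.restrict y γ) = T.restrict (gg' T γ f f' X F₀ E τ y) γ := by
        have h3 : f τ (T.restrict (gg' T γ f f' X F₀ E τ y) γ) = T.restrict y γ := hOKy.2.2
        have h2 := congrArg (f' τ) h3
        rw [hf'f _ (by rw [height_restrict_eq T γ _ hOKy.1])] at h2
        exact h2.symm
      have hfr : f' τ (T.restrict y γ) < gg' T γ f f' X F₀ E τ y := by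
        rw [hrr]
        exact restrict_lt_self T γ hOKy.1
      have hxr : x ≤ T.restrict y γ := le_restrict_of_lt T γ hxy hx h
      rcases eq_or_lt_of_le hxr with h' | h'
      · rw [h']; exact hfr
      · exact lt_trans (hf'm _ _ (by rw [height_restrict_eq T γ y h]) h') hfr

end Main

open Classical in
/-- first step at which `v` appears as a coordinate of the assignment -/
noncomputable def tv (v : α) : ℕ :=
  if h : ∃ n, v ∈ coords (Rn T γ f f' X F₀ E (n + 1)) then Nat.find h else 0

lemma tv_spec1 {v : α} (h : ∃ n, v ∈ coords (Rn T γ f f' X F₀ E (n + 1))) :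
    v ∈ coords (Rn T γ f f' X F₀ E (tv T γ f f' X F₀ E v + 1)) := by
  classical
  unfold tv; rw [dif_pos h]; exact Nat.find_spec h

lemma tv_le {v : α} {m : ℕ} (h : v ∈ coords (Rn T γ f f' X F₀ E (m + 1))) :
    tv T γ f f' X F₀ E v ≤ m := by
  classical
  unfold tv; rw [dif_pos ⟨m, h⟩]; exact Nat.find_min' _ h

lemma exists_sorted_list {β : Type} (key : β → ℕ) :
    ∀ (n : ℕ) (s : Finset β), s.card ≤ n →
      ∃ l : List β, l.Nodup ∧ (∀ x, x ∈ l ↔ x ∈ s) ∧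
        l.Pairwise (fun u v => key u ≤ key v) := by
  classical
  intro n
  induction n with
  | zero =>
    intro s hs
    have : s = ∅ := Finset.card_eq_zero.mp (Nat.le_zero.mp hs)
    subst this
    exact ⟨[], List.nodup_nil, by simp, List.Pairwise.nil⟩
  | succ n ih =>
    intro s hs
    rcases s.eq_empty_or_nonempty with rfl | hne
    · exact ⟨[], List.nodup_nil, by simp, List.Pairwise.nil⟩
    · obtain ⟨m, hm, hmin⟩ := s.exists_min_image key hne
      obtain ⟨l, hnd, hmem, hpw⟩ := ih (s.erase m) (by
        have := Finset.card_erase_of_mem hm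
        have : 1 ≤ s.card := Finset.card_pos.mpr hne
        omega)
      refine ⟨m :: l, ?_, ?_, ?_⟩
      · exact List.nodup_cons.mpr ⟨fun h => (Finset.mem_erase.mp ((hmem m).mp h)).1 rfl, hnd⟩
      · intro x
        simp only [List.mem_cons, hmem, Finset.mem_erase]
        constructor
        · rintro (rfl | ⟨_, h⟩); exacts [hm, h]
        · intro h
          by_cases hx : x = m
          exacts [Or.inl hx, Or.inr ⟨hx, h⟩]
      · refine List.pairwise_cons.mpr ⟨?_, hpw⟩
        intro x hx
        exact hmin x (Finset.mem_erase.mp ((hmem x).mp hx)).2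

lemma separation_main [Nonempty ι]
    (hf : ∀ τ, IsTreeAuto T γ (f τ) (f' τ))
    (hF₀OK : ∀ t ∈ F₀, TriOK T γ f t)
    (hF₀X : coords F₀ ⊆ X)
    (hXfin : X.Finite)
    (hE : ∀ (b : Bool) (τ : ι) (x : α), x ∈ Lv T γ → ∃ n, E n = (b, τ, x))
    (hF₀mem : ∀ t ∈ F₀, t.1.2 ∈ X ∧ t.2 ∈ X)
    (K : Set ι)
    (hc1 : ∀ {τ : ι} {x : α}, τ ∈ K → ((τ, x), x) ∉ F₀)
    (N : ℕ) (c : Fin N → α) (hcinj : Function.Injective c) (hcrange : Set.range c = X)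
    (hc2 : ∀ (kk i₁ i₂ : Fin N) (m₁ m₂ : Bool) (τ₁ τ₂ : ι), τ₁ ∈ K → τ₂ ∈ K →
      i₁ < kk → i₂ < kk →
      cond m₁ (((τ₁, c kk), c i₁) ∈ F₀) (((τ₁, c i₁), c kk) ∈ F₀) →
      cond m₂ (((τ₂, c kk), c i₂) ∈ F₀) (((τ₂, c i₂), c kk) ∈ F₀) →
      i₁ = i₂ ∧ m₁ = m₂ ∧ τ₁ = τ₂)
    (X' : Set α) (hX'fin : X'.Finite) (hX'lev : ∀ x ∈ X', T.height x = γ + 1) :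
    ∃ (n : ℕ) (a : Fin n → α), Function.Injective a ∧ Set.range a = X' ∧
      AutoSepTuple (fun τ : ↥K => gg T γ f f' X F₀ E τ.1)
        (fun τ : ↥K => gg' T γ f f' X F₀ E τ.1) a := by
  classical
  have hX'Lv : ∀ {x : α}, x ∈ X' → x ∈ Lv T γ := fun hx => hX'lev _ hx
  set D : Set α := X' \ X with hD
  have hDfin : D.Finite := hX'fin.diff
  obtain ⟨Yl, hYnd, hYmem', hYpw⟩ :=
    exists_sorted_list (tv T γ f f' X F₀ E) hDfin.toFinset.card hDfin.toFinset le_rfl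
  have hYmem : ∀ x, x ∈ Yl ↔ x ∈ D := by
    intro x; rw [hYmem' x, Set.Finite.mem_toFinset]
  set js : List (Fin N) := (List.finRange N).filter (fun j => decide (c j ∈ X')) with hjs
  set Xl : List α := js.map c with hXl
  obtain ⟨l, hl⟩ : ∃ l' : List α, l' = Xl ++ Yl := ⟨_, rfl⟩
  have hjsnd : js.Nodup := (List.nodup_finRange N).filter _
  have hjspw : js.Pairwise (· < ·) :=
    List.Pairwise.sublist (List.filter_sublist) (List.pairwise_lt_finRange N)
  have hjsmem : ∀ j, j ∈ js ↔ c j ∈ X' := by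
    intro j; simp [hjs, List.mem_filter]
  have hXlnd : Xl.Nodup := hjsnd.map hcinj
  have hXmemX : ∀ x, x ∈ Xl ↔ x ∈ X ∧ x ∈ X' := by
    intro x
    simp only [hXl, List.mem_map]
    constructor
    · rintro ⟨j, hj, rfl⟩
      exact ⟨hcrange ▸ Set.mem_range_self j, (hjsmem j).mp hj⟩
    · rintro ⟨hx1, hx2⟩
      obtain ⟨j, rfl⟩ := Set.mem_range.mp (hcrange ▸ hx1)
      exact ⟨j, (hjsmem j).mpr hx2, rfl⟩
  have hnd : l.Nodup := by
    rw [hl]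
    refine List.Nodup.append hXlnd hYnd ?_
    intro x hx hy
    exact (((hYmem x).mp hy).2) ((hXmemX x).mp hx).1
  have hmeml : ∀ x, x ∈ l ↔ x ∈ X' := by
    intro x
    rw [hl, List.mem_append, hXmemX, hYmem]
    constructor
    · rintro (⟨_, h⟩ | h); exacts [h, h.1]
    · intro h
      by_cases hx : x ∈ X
      exacts [Or.inl ⟨hx, h⟩, Or.inr ⟨h, hx⟩]
  set a : Fin l.length → α := l.get with ha
  have hainj : Function.Injective a := List.nodup_iff_injective_get.mp hnd
  have harange : Set.range a = X' := by
    ext x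
    rw [Set.mem_range, ← hmeml x]
    exact ⟨fun ⟨i, hi⟩ => hi ▸ List.get_mem l i, fun h => List.mem_iff_get.mp h⟩
  have hjslen : js.length = Xl.length := by rw [hXl, List.length_map]
  have hlen : l.length = Xl.length + Yl.length := by rw [hl, List.length_append]
  -- position facts
  have hgetXl : ∀ (i : Fin l.length) (hi : (i : ℕ) < Xl.length),
      a i = c (js.get ⟨(i : ℕ), by omega⟩) := by
    intro i hi
    have e1 : a i = Xl[(i : ℕ)]'hi := by
      subst hl
      exact List.getElem_append_left hi
    have e2 : Xl[(i : ℕ)]'hi = c (js[(i : ℕ)]'(by omega)) := List.getElem_map c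
    exact e1.trans e2
  have hgetYl : ∀ (i : Fin l.length) (hi : Xl.length ≤ (i : ℕ)),
      a i = Yl[(i : ℕ) - Xl.length]'(by
        have h9 := i.2
        omega) := by
    intro i hi
    have e1 : a i = Yl[(i : ℕ) - Xl.length]'(by have h9 := i.2; omega) := by
      subst hl
      exact List.getElem_append_right hi
    exact e1
  have memX_of_lt : ∀ (i : Fin l.length), (i : ℕ) < Xl.length → a i ∈ X := by
    intro i hi
    rw [hgetXl i hi]
    exact hcrange ▸ Set.mem_range_self _
  have memD_of_ge : ∀ (i : Fin l.length), Xl.length ≤ (i : ℕ) → a i ∈ D := by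
    intro i hi
    rw [hgetYl i hi]
    exact (hYmem _).mp (List.getElem_mem _)
  have hmemX' : ∀ (i : Fin l.length), a i ∈ X' := by
    intro i
    exact (hmeml _).mp (List.get_mem l i)
  -- conversion of relations to triples
  have conv : ∀ (kk i : Fin l.length) (m : Bool) (τ : ι),
      cond m (gg T γ f f' X F₀ E τ (a kk)) (gg' T γ f f' X F₀ E τ (a kk)) = a i →
      (cond m ((τ, a kk), a i) ((τ, a i), a kk)) ∈ Rinf T γ f f' X F₀ E := by
    intro kk i m τ h
    cases m
    · simp only [Bool.cond_false] at h ⊢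
      have := gg'_mem T γ f f' X F₀ E hf hF₀X hXfin hE (τ := τ) (hX'Lv (hmemX' kk))
      rwa [h] at this
    · simp only [Bool.cond_true] at h ⊢
      have := gg_mem T γ f f' X F₀ E hf hF₀X hXfin hE (τ := τ) (hX'Lv (hmemX' kk))
      rwa [h] at this
  have hforce : ∀ {t : (ι × α) × α}, t ∈ Rinf T γ f f' X F₀ E →
      t.1.2 ∈ X → t.2 ∈ X → t ∈ F₀ := by
    intro t ht h1 h2
    rcases mem_Rinf_cases T γ f f' X F₀ E ht with hF | ⟨n', hn1, hn2⟩
    · exact hF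
    · rcases (fresh_side T γ f f' X F₀ E hn1 hn2).2 with ⟨hX1, _⟩ | ⟨hX2, _⟩
      exacts [absurd h1 hX1, absurd h2 hX2]
  refine ⟨l.length, a, hainj, harange, ?_, ?_⟩
  · -- condition (1)
    intro kk τ heq
    replace heq : gg T γ f f' X F₀ E τ.1 (a kk) = a kk := heq
    have hvLv := hX'Lv (hmemX' kk)
    have hm : ((τ.1, a kk), a kk) ∈ Rinf T γ f f' X F₀ E := by
      have := gg_mem T γ f f' X F₀ E hf hF₀X hXfin hE (τ := τ.1) hvLv
      rwa [heq] at this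
    rcases mem_Rinf_cases T γ f f' X F₀ E hm with hF | ⟨n', hn1, hn2⟩
    · exact hc1 τ.2 hF
    · exact (fresh_side T γ f f' X F₀ E hn1 hn2).1 rfl
  · -- condition (2)
    intro kk i₁ i₂ m₁ m₂ τ₁ τ₂ hlt₁ hlt₂ hr₁ hr₂
    replace hr₁ : cond m₁ (gg T γ f f' X F₀ E τ₁.1 (a kk)) (gg' T γ f f' X F₀ E τ₁.1 (a kk)) =
      a i₁ := hr₁
    replace hr₂ : cond m₂ (gg T γ f f' X F₀ E τ₂.1 (a kk)) (gg' T γ f f' X F₀ E τ₂.1 (a kk)) =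
      a i₂ := hr₂
    have ht₁ := conv kk i₁ m₁ τ₁.1 hr₁
    have ht₂ := conv kk i₂ m₂ τ₂.1 hr₂
    by_cases hkP : (kk : ℕ) < Xl.length
    · -- X-part: all indices are in `X`, relations are forced
      have hi₁P : (i₁ : ℕ) < Xl.length := lt_trans hlt₁ hkP
      have hi₂P : (i₂ : ℕ) < Xl.length := lt_trans hlt₂ hkP
      have toF : ∀ (i : Fin l.length) (hiP : (i : ℕ) < Xl.length) (m : Bool) (τ : ι),
          (cond m ((τ, a kk), a i) ((τ, a i), a kk)) ∈ Rinf T γ f f' X F₀ E →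
          cond m (((τ, c (js.get ⟨kk, by omega⟩)), c (js.get ⟨i, by omega⟩)) ∈ F₀)
            (((τ, c (js.get ⟨i, by omega⟩)), c (js.get ⟨kk, by omega⟩)) ∈ F₀) := by
        intro i hiP m τ hmem
        have e1 := hgetXl kk hkP
        have e2 := hgetXl i hiP
        cases m
        · simp only [Bool.cond_false] at hmem ⊢
          have := hforce hmem (memX_of_lt i hiP) (memX_of_lt kk hkP)
          rwa [e1, e2] at this
        · simp only [Bool.cond_true] at hmem ⊢
          have := hforce hmem (memX_of_lt kk hkP) (memX_of_lt i hiP)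
          rwa [e1, e2] at this
      have hjlt : ∀ (i : Fin l.length) (hiP : (i : ℕ) < Xl.length), (i : ℕ) < (kk : ℕ) →
          js.get ⟨i, by omega⟩ < js.get ⟨kk, by omega⟩ := by
        intro i hiP hik
        exact List.pairwise_iff_get.mp hjspw ⟨(i : ℕ), by omega⟩ ⟨(kk : ℕ), by omega⟩
          (by simp only [Fin.mk_lt_mk]; exact hik)
      obtain ⟨hj, hm, hτ⟩ := hc2 (js.get ⟨kk, by omega⟩) (js.get ⟨i₁, by omega⟩)
        (js.get ⟨i₂, by omega⟩) m₁ m₂ τ₁.1 τ₂.1 τ₁.2 τ₂.2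
        (hjlt i₁ hi₁P hlt₁) (hjlt i₂ hi₂P hlt₂)
        (toF i₁ hi₁P m₁ τ₁.1 ht₁) (toF i₂ hi₂P m₂ τ₂.1 ht₂)
      refine ⟨?_, hm, Subtype.ext hτ⟩
      have h5 : (i₁ : ℕ) = (i₂ : ℕ) := by
        simpa using List.nodup_iff_injective_get.mp hjsnd hj
      exact Fin.ext h5
    · -- Y-part
      have hvD : a kk ∈ D := memD_of_ge kk (le_of_not_gt hkP)
      have hvX : a kk ∉ X := hvD.2
      have hvco : ∃ n, a kk ∈ coords (Rn T γ f f' X F₀ E (n + 1)) := by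
        obtain ⟨y, hy⟩ := exists_fwd T γ f f' X F₀ E hf hF₀X hXfin hE
          (Classical.arbitrary ι) (a kk) (hX'Lv (hmemX' kk))
        rcases mem_Rinf_cases T γ f f' X F₀ E hy with hF | ⟨n', hn1, _⟩
        · exact absurd (hF₀X (mem_coords_left hF)) hvX
        · exact ⟨n', mem_coords_left hn1⟩
      have locate : ∀ (i : Fin l.length), (i : ℕ) < (kk : ℕ) → ∀ {t : (ι × α) × α},
          t ∈ Rinf T γ f f' X F₀ E →
          ((t.1.2 = a kk ∧ t.2 = a i) ∨ (t.1.2 = a i ∧ t.2 = a kk)) →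
          (t ∈ Rn T γ f f' X F₀ E (tv T γ f f' X F₀ E (a kk) + 1) ∧
            t ∉ Rn T γ f f' X F₀ E (tv T γ f f' X F₀ E (a kk))) := by
        intro i hik t ht hco
        rcases mem_Rinf_cases T γ f f' X F₀ E ht with hF | ⟨n', hn1, hn2⟩
        · exfalso
          rcases hco with ⟨h1, _⟩ | ⟨_, h2⟩
          · exact hvX (h1 ▸ (hF₀mem t hF).1)
          · exact hvX (h2 ▸ (hF₀mem t hF).2)
        · have hvcoord : a kk ∈ coords (Rn T γ f f' X F₀ E (n' + 1)) := by
            rcases hco with ⟨h1, _⟩ | ⟨_, h2⟩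
            · exact ⟨t, hn1, Or.inl h1.symm⟩
            · exact ⟨t, hn1, Or.inr h2.symm⟩
          have hucoord : a i ∈ coords (Rn T γ f f' X F₀ E (n' + 1)) := by
            rcases hco with ⟨_, h2⟩ | ⟨h1, _⟩
            · exact ⟨t, hn1, Or.inr h2.symm⟩
            · exact ⟨t, hn1, Or.inl h1.symm⟩
          have htv_le : tv T γ f f' X F₀ E (a kk) ≤ n' := tv_le T γ f f' X F₀ E hvcoord
          have hn'le : n' ≤ tv T γ f f' X F₀ E (a kk) := by
            by_contra hlt
            push_neg at hlt
            have hvmem : a kk ∈ coords (Rn T γ f f' X F₀ E n') :=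
              coords_mono (Rn_mono T γ f f' X F₀ E (by omega))
                (tv_spec1 T γ f f' X F₀ E hvco)
            obtain ⟨hne, hside⟩ := fresh_side T γ f f' X F₀ E hn1 hn2
            -- the fresh coordinate must be `a i`
            have huX : a i ∉ X ∧ a i ∉ coords (Rn T γ f f' X F₀ E n') := by
              rcases hside with ⟨hX1, hc1'⟩ | ⟨hX2, hc2'⟩ <;> rcases hco with ⟨h1, h2⟩ | ⟨h1, h2⟩
              · exact absurd (h1 ▸ hvmem) hc1'
              · exact ⟨h1 ▸ hX1, h1 ▸ hc1'⟩
              · exact ⟨h2 ▸ hX2, h2 ▸ hc2'⟩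
              · exact absurd (h2 ▸ hvmem) hc2'
            -- then `a i` is in the Y-part, so `tv (a i) ≤ tv (a kk) < n'`, contradiction
            by_cases hiP : (i : ℕ) < Xl.length
            · exact huX.1 (memX_of_lt i hiP)
            · have hiD : a i ∈ D := memD_of_ge i (le_of_not_gt hiP)
              have hYi : tv T γ f f' X F₀ E (a i) ≤ tv T γ f f' X F₀ E (a kk) := by
                have hkge : Xl.length ≤ (kk : ℕ) := le_of_not_gt hkP
                have e1 := hgetYl i (le_of_not_gt hiP)
                have e2 := hgetYl kk hkge
                have hYpw' := List.pairwise_iff_get.mp hYpw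
                  ⟨(i : ℕ) - Xl.length, by have h9 := i.2; omega⟩
                  ⟨(kk : ℕ) - Xl.length, by have h9 := kk.2; omega⟩
                  (by simp only [Fin.mk_lt_mk]; omega)
                rw [e1, e2]
                exact hYpw'
              have : a i ∈ coords (Rn T γ f f' X F₀ E n') :=
                coords_mono (Rn_mono T γ f f' X F₀ E (by omega))
                  (tv_spec1 T γ f f' X F₀ E ⟨n', hucoord⟩)
              exact huX.2 this
          have : n' = tv T γ f f' X F₀ E (a kk) := le_antisymm hn'le htv_le
          rw [← this]
          exact ⟨hn1, hn2⟩
      have hco₁ : ((cond m₁ ((τ₁.1, a kk), a i₁) ((τ₁.1, a i₁), a kk)).1.2 = a kk ∧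
            (cond m₁ ((τ₁.1, a kk), a i₁) ((τ₁.1, a i₁), a kk)).2 = a i₁) ∨
          ((cond m₁ ((τ₁.1, a kk), a i₁) ((τ₁.1, a i₁), a kk)).1.2 = a i₁ ∧
            (cond m₁ ((τ₁.1, a kk), a i₁) ((τ₁.1, a i₁), a kk)).2 = a kk) := by
        cases m₁
        · exact Or.inr ⟨rfl, rfl⟩
        · exact Or.inl ⟨rfl, rfl⟩
      have hco₂ : ((cond m₂ ((τ₂.1, a kk), a i₂) ((τ₂.1, a i₂), a kk)).1.2 = a kk ∧
            (cond m₂ ((τ₂.1, a kk), a i₂) ((τ₂.1, a i₂), a kk)).2 = a i₂) ∨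
          ((cond m₂ ((τ₂.1, a kk), a i₂) ((τ₂.1, a i₂), a kk)).1.2 = a i₂ ∧
            (cond m₂ ((τ₂.1, a kk), a i₂) ((τ₂.1, a i₂), a kk)).2 = a kk) := by
        cases m₂
        · exact Or.inr ⟨rfl, rfl⟩
        · exact Or.inl ⟨rfl, rfl⟩
      have hnt₁ := locate i₁ hlt₁ ht₁ hco₁
      have hnt₂ := locate i₂ hlt₂ ht₂ hco₂
      have hteq : (cond m₁ ((τ₁.1, a kk), a i₁) ((τ₁.1, a i₁), a kk) : (ι × α) × α) =
          cond m₂ ((τ₂.1, a kk), a i₂) ((τ₂.1, a i₂), a kk) :=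
        newTri_subsingleton T γ f f' X E
          (mem_Rn_succ T γ f f' X F₀ E hnt₁.1 hnt₁.2)
          (mem_Rn_succ T γ f f' X F₀ E hnt₂.1 hnt₂.2)
      have hkk_ne₁ : a i₁ ≠ a kk := by
        intro h
        have := hainj h
        omega
      have hkk_ne₂ : a i₂ ≠ a kk := by
        intro h
        have := hainj h
        omega
      cases m₁ <;> cases m₂
      · have hττ : τ₁.1 = τ₂.1 := congrArg (fun t => t.1.1) hteq
        have hii : a i₁ = a i₂ := congrArg (fun t => t.1.2) hteq
        exact ⟨hainj hii, rfl, Subtype.ext hττ⟩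
      · have h1 : a i₁ = a kk := congrArg (fun t => t.1.2) hteq
        exact absurd h1 hkk_ne₁
      · have h1 : a kk = a i₂ := congrArg (fun t => t.1.2) hteq
        exact absurd h1.symm hkk_ne₂
      · have hττ : τ₁.1 = τ₂.1 := congrArg (fun t => t.1.1) hteq
        have hii : a i₁ = a i₂ := congrArg (fun t => t.2) hteq
        exact ⟨hainj hii, rfl, Subtype.ext hττ⟩

lemma finite_tuple {β : Type} {s : Set β} (hs : s.Finite) :
    ∃ (n : ℕ) (a : Fin n → β), Function.Injective a ∧ Set.range a = s := by
  classical
  obtain ⟨l, hnd, hmem, _⟩ :=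
    exists_sorted_list (fun _ => 0) hs.toFinset.card hs.toFinset le_rfl
  refine ⟨l.length, l.get, List.nodup_iff_injective_get.mp hnd, ?_⟩
  ext x
  rw [Set.mem_range]
  constructor
  · rintro ⟨i, rfl⟩
    exact hs.mem_toFinset.mp ((hmem _).mp (List.get_mem l i))
  · intro hx
    exact List.mem_iff_get.mp ((hmem x).mpr (hs.mem_toFinset.mpr hx))


end L541

/-- Lemma 5.41: one-step extension of a countable family of automorphisms indexed
by a set partitioned as `{I₀} ∪ {J k : k < nn}`, which is consistent on `X` for the
indices in `A ∪ ⋃ k, Ak k` and such that each subfamily indexed by `I₀ ∪ J k`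
is separated. -/
theorem auto_family_extension_partitioned
    (T : OmegaOneTree α) (γ : Ordinal) (hγ : γ < omega1) (nn : ℕ)
    (X : Set α) (hXfin : X.Finite) (hXlev : ∀ x ∈ X, T.height x = γ + 1)
    (hXdrop : Set.InjOn (fun x => T.restrict x γ) X)
    {ι : Type} [Countable ι] (f f' : ι → α → α)
    (hf : ∀ τ, IsTreeAuto T γ (f τ) (f' τ))
    (I₀ : Set ι) (J : Fin nn → Set ι)
    (hcover : (I₀ ∪ ⋃ k, J k) = Set.univ)
    (hdisj₀ : ∀ k, Disjoint I₀ (J k))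
    (hdisjJ : ∀ k l : Fin nn, k ≠ l → Disjoint (J k) (J l))
    (A : Set ι) (hAfin : A.Finite) (hAsub : A ⊆ I₀)
    (Ak : Fin nn → Set ι) (hAkfin : ∀ k, (Ak k).Finite) (hAksub : ∀ k, Ak k ⊆ J k)
    (hsep : ∀ k : Fin nn,
      AutoSepSet (fun τ : ↥(A ∪ Ak k) => f τ.1) (fun τ : ↥(A ∪ Ak k) => f' τ.1)
        ((fun x => T.restrict x γ) '' X)) :
    ∃ g g' : ι → α → α,
      (∀ τ, IsTreeAuto T (γ + 1) (g τ) (g' τ)) ∧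
      (∀ τ, AutoExtends T γ (f τ) (f' τ) (g τ) (g' τ)) ∧
      (∀ τ ∈ A ∪ ⋃ k, Ak k, AutoConsistentSet T (g τ) γ X) ∧
      (∀ k : Fin nn,
        AutoSeparated T (γ + 1)
          (fun τ : ↥(I₀ ∪ J k) => g τ.1) (fun τ : ↥(I₀ ∪ J k) => g' τ.1)) := by
  classical
  rcases isEmpty_or_nonempty ι with hι | hι
  · refine ⟨f, f', fun τ => (hι.false τ).elim, fun τ => (hι.false τ).elim,
      fun τ _ => (hι.false τ).elim, ?_⟩
    intro k X' hX'fin _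
    obtain ⟨n, a, hainj, harange⟩ := L541.finite_tuple hX'fin
    exact ⟨n, a, hainj, harange, fun kk τ => (hι.false τ.1).elim,
      fun kk i₁ i₂ m₁ m₂ τ₁ τ₂ _ _ _ _ => (hι.false τ₁.1).elim⟩
  · set F₀ : Set ((ι × α) × α) := {t | t.1.1 ∈ A ∪ ⋃ j, Ak j ∧ t.1.2 ∈ X ∧ t.2 ∈ X ∧
      f t.1.1 (T.restrict t.1.2 γ) = T.restrict t.2 γ} with hF₀def
    have hXLv : ∀ x ∈ X, x ∈ L541.Lv T γ := fun x hx => hXlev x hx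
    have hF₀OK : ∀ t ∈ F₀, L541.TriOK T γ f t := fun t ht =>
      ⟨hXLv _ ht.2.1, hXLv _ ht.2.2.1, ht.2.2.2⟩
    have hF₀X : L541.coords F₀ ⊆ X := by
      rintro v ⟨t, ht, h | h⟩
      exacts [h ▸ ht.2.1, h ▸ ht.2.2.1]
    have hF₀mem : ∀ t ∈ F₀, t.1.2 ∈ X ∧ t.2 ∈ X := fun t ht => ⟨ht.2.1, ht.2.2.1⟩
    have hre : ∀ x ∈ X, T.height (T.restrict x γ) = γ := fun x hx =>
      L541.height_restrict_eq T γ x (hXLv x hx)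
    have hrinj : ∀ (τ : ι) {u v : α}, T.height u ≤ γ → T.height v ≤ γ →
        f τ u = f τ v → u = v := by
      intro τ u v hu hv h
      have h1 := (hf τ).2.2.1 u hu
      have h2 := (hf τ).2.2.1 v hv
      rw [← h1, ← h2, h]
    have hF₀fun : ∀ {τ' : ι} {a b₁ b₂ : α}, ((τ', a), b₁) ∈ F₀ → ((τ', a), b₂) ∈ F₀ →
        b₁ = b₂ := by
      intro τ' a b₁ b₂ h1 h2
      exact hXdrop h1.2.2.1 h2.2.2.1 (h1.2.2.2.symm.trans h2.2.2.2)
    have hF₀cofun : ∀ {τ' : ι} {a₁ a₂ b : α}, ((τ', a₁), b) ∈ F₀ → ((τ', a₂), b) ∈ F₀ →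
        a₁ = a₂ := by
      intro τ' a₁ a₂ b h1 h2
      have h3 : f τ' (T.restrict a₁ γ) = f τ' (T.restrict a₂ γ) :=
        h1.2.2.2.trans h2.2.2.2.symm
      exact hXdrop h1.2.1 h2.2.1
        (hrinj τ' (by rw [hre _ h1.2.1]) (by rw [hre _ h2.2.1]) h3)
    -- an enumeration of `Bool × ι × (level γ+1)`
    have hγ1 : γ + 1 < omega1 := by
      rw [Ordinal.add_one_eq_succ]
      exact (Cardinal.isSuccLimit_ord (Cardinal.aleph0_le_aleph 1)).succ_lt hγ
    obtain ⟨x0, hx0⟩ := T.level_nonempty (γ + 1) hγ1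
    obtain ⟨fL, hfL⟩ := (T.level_countable (γ + 1)).exists_eq_range ⟨x0, hx0⟩
    obtain ⟨fι, hfι⟩ := exists_surjective_nat ι
    obtain ⟨q, hq⟩ := exists_surjective_nat (Bool × ℕ × ℕ)
    set E : ℕ → Bool × ι × α := fun n => ((q n).1, fι (q n).2.1, fL (q n).2.2) with hEdef
    have hE : ∀ (b : Bool) (τ : ι) (x : α), x ∈ L541.Lv T γ → ∃ n, E n = (b, τ, x) := by
      intro b τ x hx
      have hx' : x ∈ Set.range fL := by
        rw [← hfL]
        exact hx
      obtain ⟨m2, hm2⟩ := hx'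
      obtain ⟨m1, hm1⟩ := hfι τ
      obtain ⟨n, hn⟩ := hq (b, m1, m2)
      refine ⟨n, ?_⟩
      rw [hEdef]
      simp only [hn, hm1, hm2]
    refine ⟨L541.gg T γ f f' X F₀ E, L541.gg' T γ f f' X F₀ E, ?_, ?_, ?_, ?_⟩
    · exact fun τ => L541.gg_auto T γ f f' X F₀ E hf hF₀OK hF₀X hXfin hE hF₀fun hF₀cofun τ
    · exact fun τ => ⟨fun x hx => L541.gg_low T γ f f' X F₀ E hx,
        fun x hx => L541.gg'_low T γ f f' X F₀ E hx⟩
    · intro τ hτ x hx y hy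
      have h1 : L541.gg T γ f f' X F₀ E τ (T.restrict x γ) = f τ (T.restrict x γ) :=
        L541.gg_low T γ f f' X F₀ E (by rw [hre x hx])
      rw [h1]
      constructor
      · intro h
        have hmem : ((τ, x), y) ∈ F₀ := ⟨hτ, hx, hy, h⟩
        exact L541.gg_eq_of_mem T γ f f' X F₀ E hf hF₀X hXfin hE hF₀fun
          (L541.F₀_subset_Rinf T γ f f' X F₀ E hmem) (hXLv x hx)
      · intro h
        have hmem := L541.gg_mem T γ f f' X F₀ E hf hF₀X hXfin hE (τ := τ) (hXLv x hx)
        rw [h] at hmem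
        exact (L541.Rinf_triOK T γ f f' X F₀ E hf hF₀OK hmem).2.2
    · intro k
      have hBK : ∀ {τ : ι}, τ ∈ (A ∪ ⋃ j, Ak j) → τ ∈ I₀ ∪ J k → τ ∈ A ∪ Ak k := by
        intro τ hB hK
        rcases hB with hA | hAk'
        · exact Or.inl hA
        · obtain ⟨j, hj⟩ := Set.mem_iUnion.mp hAk'
          by_cases hjk : j = k
          · exact Or.inr (hjk ▸ hj)
          · exfalso
            have hJj : τ ∈ J j := hAksub j hj
            rcases hK with h0 | hk'
            · exact Set.disjoint_left.mp (hdisj₀ j) h0 hJj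
            · exact Set.disjoint_left.mp (hdisjJ k j (Ne.symm hjk)) hk' hJj
      obtain ⟨N, b, binj, brange, bsep⟩ := hsep k
      have hbj : ∀ j : Fin N, ∃ x, x ∈ X ∧ T.restrict x γ = b j := by
        intro j
        have : b j ∈ (fun x => T.restrict x γ) '' X := by
          rw [← brange]
          exact Set.mem_range_self j
        obtain ⟨x, hx1, hx2⟩ := this
        exact ⟨x, hx1, hx2⟩
      set c : Fin N → α := fun j => (hbj j).choose with hcdef
      have hcX : ∀ j, c j ∈ X := fun j => (hbj j).choose_spec.1
      have hcd : ∀ j, T.restrict (c j) γ = b j := fun j => (hbj j).choose_spec.2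
      have hcinj : Function.Injective c := by
        intro j1 j2 h
        apply binj
        rw [← hcd j1, ← hcd j2, h]
      have hcrange : Set.range c = X := by
        apply Set.eq_of_subset_of_subset
        · rintro v ⟨j, rfl⟩
          exact hcX j
        · intro x hx
          have hx2 : T.restrict x γ ∈ Set.range b := by
            rw [brange]
            exact ⟨x, hx, rfl⟩
          obtain ⟨j, hj⟩ := hx2
          refine ⟨j, ?_⟩
          apply hXdrop (hcX j) hx
          show T.restrict (c j) γ = T.restrict x γ
          rw [hcd j, hj]
      have hbheight : ∀ j, T.height (b j) = γ := fun j => by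
        rw [← hcd j]
        exact hre _ (hcX j)
      have hc1 : ∀ {τ : ι} {x : α}, τ ∈ I₀ ∪ J k → ((τ, x), x) ∉ F₀ := by
        intro τ x hτ hmem
        obtain ⟨hB', hxX, _, hrel⟩ := hmem
        have hτ' : τ ∈ A ∪ Ak k := hBK hB' hτ
        have hx2 : T.restrict x γ ∈ Set.range b := by
          rw [brange]
          exact ⟨x, hxX, rfl⟩
        obtain ⟨j, hj⟩ := hx2
        rw [← hj] at hrel
        exact bsep.1 j ⟨τ, hτ'⟩ hrel
      have hc2 : ∀ (kk i₁ i₂ : Fin N) (m₁ m₂ : Bool) (τ₁ τ₂ : ι),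
          τ₁ ∈ I₀ ∪ J k → τ₂ ∈ I₀ ∪ J k → i₁ < kk → i₂ < kk →
          cond m₁ (((τ₁, c kk), c i₁) ∈ F₀) (((τ₁, c i₁), c kk) ∈ F₀) →
          cond m₂ (((τ₂, c kk), c i₂) ∈ F₀) (((τ₂, c i₂), c kk) ∈ F₀) →
          i₁ = i₂ ∧ m₁ = m₂ ∧ τ₁ = τ₂ := by
        intro kk i₁ i₂ m₁ m₂ τ₁ τ₂ hK1 hK2 h1 h2 hm1 hm2
        have tr : ∀ (m : Bool) (τ : ι) (i : Fin N),
            cond m (((τ, c kk), c i) ∈ F₀) (((τ, c i), c kk) ∈ F₀) → τ ∈ I₀ ∪ J k →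
            τ ∈ A ∪ Ak k ∧ cond m (f τ (b kk)) (f' τ (b kk)) = b i := by
          intro m τ i hm hK'
          cases m
          · simp only [Bool.cond_false] at hm ⊢
            obtain ⟨hB', _, _, hrel⟩ := hm
            refine ⟨hBK hB' hK', ?_⟩
            rw [hcd i, hcd kk] at hrel
            rw [← hrel, (hf τ).2.2.1 _ (by rw [hbheight i])]
          · simp only [Bool.cond_true] at hm ⊢
            obtain ⟨hB', _, _, hrel⟩ := hm
            refine ⟨hBK hB' hK', ?_⟩
            rw [hcd i, hcd kk] at hrel
            exact hrel
        obtain ⟨hA1, he1⟩ := tr m₁ τ₁ i₁ hm1 hK1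
        obtain ⟨hA2, he2⟩ := tr m₂ τ₂ i₂ hm2 hK2
        obtain ⟨hii, hmm, hττ⟩ := bsep.2 kk i₁ i₂ m₁ m₂ ⟨τ₁, hA1⟩ ⟨τ₂, hA2⟩ h1 h2 he1 he2
        exact ⟨hii, hmm, congrArg Subtype.val hττ⟩
      intro X' hX'fin hX'lev
      exact L541.separation_main T γ f f' X F₀ E hf hF₀OK hF₀X hXfin hE hF₀mem
        (I₀ ∪ J k) hc1 N c hcinj hcrange hc2 X' hX'fin hX'lev
end
end

section
/- Assume CH (2^ℵ₀ = ℵ₁). Then the automorphism forcing poset ℙ is ω₂-c.c.: every antichain of ℙ has cardinality less than ℵ₂. -/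
noncomputable section

variable {α : Type} [PartialOrder α]

/-- A condition of the automorphism forcing `ℙ`: a function with countable domain
contained in `κ`, assigning to each index in its domain an automorphism of
`T↾(top+1)` (given together with its inverse) for a common top level `top < ω₁`. -/
structure AutoCond (T : OmegaOneTree α) (κ : Ordinal) where
  dom : Set Ordinal
  dom_sub : dom ⊆ Set.Iio κ
  dom_countable : dom.Countable
  top : Ordinal
  top_lt : top < omega1
  fn : Ordinal → α → α
  inv : Ordinal → α → α
  fn_auto : ∀ τ ∈ dom, IsTreeAuto T top (fn τ) (inv τ)

/-- The order on the automorphism forcing: `q ≤ p` iff `dom p ⊆ dom q` and for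
every `τ ∈ dom p`, `q(τ)` extends `p(τ)` as an automorphism. -/
def AutoCondLE {T : OmegaOneTree α} {κ : Ordinal} (q p : AutoCond T κ) : Prop :=
  p.dom ⊆ q.dom ∧ p.top ≤ q.top ∧
    ∀ τ ∈ p.dom, ∀ x : α, T.height x ≤ p.top →
      q.fn τ x = p.fn τ x ∧ q.inv τ x = p.inv τ x

/-- Compatibility in the automorphism forcing. -/
def AutoCompatible {T : OmegaOneTree α} {κ : Ordinal} (p q : AutoCond T κ) : Prop :=
  ∃ r : AutoCond T κ, AutoCondLE r p ∧ AutoCondLE r q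

namespace CC
open Cardinal Set

theorem succ_one_ord : Order.succ (1 : Ordinal) = 2 :=
  (Ordinal.add_one_eq_succ 1).symm.trans one_add_one_eq_two

theorem aleph2_eq_succ : (aleph 2 : Cardinal.{u}) = Order.succ (aleph 1) := by
  rw [← Cardinal.aleph_succ, succ_one_ord]

theorem isRegular_aleph_two : (aleph 2 : Cardinal.{u}).IsRegular := by
  rw [aleph2_eq_succ]
  exact Cardinal.isRegular_succ (aleph0_le_aleph 1)

theorem aleph1_lt_aleph2 : (aleph 1 : Cardinal.{u}) < aleph 2 :=
  Cardinal.aleph_lt_aleph.2 one_lt_two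

theorem le_aleph1_of_lt_aleph2 {c : Cardinal.{u}} (h : c < aleph 2) : c ≤ aleph 1 := by
  rwa [aleph2_eq_succ, Order.lt_succ_iff] at h

theorem aleph2_le_of_not_le {c : Cardinal.{u}} (h : ¬ c ≤ aleph 1) : aleph 2 ≤ c := by
  rw [aleph2_eq_succ]
  exact Order.succ_le_of_lt (not_le.1 h)

theorem exists_gt_of_small {c : Cardinal.{u}} (hreg : c.IsRegular)
    {S : Set c.ord.ToType} (hS : #S < c) : ∃ b, ∀ x ∈ S, x < b := by
  haveI : IsWellOrder c.ord.ToType ((· < ·) : c.ord.ToType → c.ord.ToType → Prop) :=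
    isWellOrder_lt
  by_contra hcon
  push_neg at hcon
  have hcof := Order.cof_le (s := S) hcon
  rw [Ordinal.cof_toType, hreg.cof_ord] at hcof
  exact absurd hS (not_lt.2 hcof)

theorem exists_gt_single {c : Cardinal.{u}} (hreg : c.IsRegular) (x : c.ord.ToType) :
    ∃ y, x < y := by
  obtain ⟨b, hb⟩ := exists_gt_of_small hreg (S := {x})
    (by rw [mk_singleton]; exact lt_of_lt_of_le one_lt_aleph0 hreg.aleph0_le)
  exact ⟨b, hb x rfl⟩

theorem exists_lub {c : Cardinal.{u}} (hreg : c.IsRegular) {S : Set c.ord.ToType}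
    (hS : #S < c) : ∃ b, (∀ x ∈ S, x < b) ∧ ∀ v, v < b → ∃ x ∈ S, v ≤ x := by
  classical
  obtain ⟨b0, hb0⟩ := exists_gt_of_small hreg hS
  have hne : {b : c.ord.ToType | ∀ x ∈ S, x < b}.Nonempty := ⟨b0, hb0⟩
  have wf : WellFounded ((· < ·) : c.ord.ToType → c.ord.ToType → Prop) := wellFounded_lt
  refine ⟨wf.min _ hne, wf.min_mem _ hne, fun v hv => ?_⟩
  by_contra hcon
  push_neg at hcon
  have hvS : v ∈ {b : c.ord.ToType | ∀ x ∈ S, x < b} := fun x hx => hcon x hx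
  exact wf.not_lt_min _ hvS hv

theorem CH_any (hCH : (2 : Cardinal.{1}) ^ (Cardinal.aleph0 : Cardinal.{1}) = Cardinal.aleph 1) :
    (2 : Cardinal.{u}) ^ (Cardinal.aleph0 : Cardinal.{u}) = Cardinal.aleph 1 := by
  have h0 : (2 : Cardinal.{0}) ^ (Cardinal.aleph0 : Cardinal.{0}) = Cardinal.aleph 1 := by
    apply Cardinal.lift_injective.{1}
    rw [lift_power, lift_aleph0, lift_two, lift_aleph, Ordinal.lift_one]
    exact hCH
  have h1 := congrArg Cardinal.lift.{u,0} h0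
  rwa [lift_power, lift_aleph0, lift_two, lift_aleph, Ordinal.lift_one] at h1

variable (hCH : (2 : Cardinal.{u}) ^ (Cardinal.aleph0 : Cardinal.{u}) = Cardinal.aleph 1)

include hCH

theorem aleph1_power_aleph0 : (aleph 1 : Cardinal.{u}) ^ (aleph0 : Cardinal.{u}) = aleph 1 := by
  conv_lhs => rw [← hCH]
  rw [← power_mul, aleph0_mul_aleph0, hCH]

theorem mk_countable_subsets {X : Type u} (hX : #X ≤ aleph 1) :
    #{s : Set X // s.Countable} ≤ aleph 1 := by
  have hdec : ∀ f : ULift.{u} ℕ → Option X, {x : X | ∃ n, f n = some x}.Countable := by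
    intro f
    have he : {x : X | ∃ n, f n = some x} = ⋃ n : ULift.{u} ℕ, {x | f n = some x} := by
      ext x; simp [Set.mem_iUnion]
    rw [he]
    refine countable_iUnion fun n => Set.Subsingleton.countable ?_
    intro x hx y hy
    exact Option.some_injective _ ((hx : f n = some x).symm.trans hy)
  have hsurj : Function.Surjective (fun f : ULift.{u} ℕ → Option X =>
      (⟨_, hdec f⟩ : {s : Set X // s.Countable})) := by
    rintro ⟨s, hs⟩
    rcases s.eq_empty_or_nonempty with rfl | hne
    · refine ⟨fun _ => none, Subtype.ext ?_⟩
      ext x; simp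
    · obtain ⟨g, rfl⟩ := hs.exists_eq_range hne
      refine ⟨fun n => some (g n.down), Subtype.ext ?_⟩
      ext x
      constructor
      · rintro ⟨n, hn⟩
        exact ⟨n.down, Option.some_inj.1 hn⟩
      · rintro ⟨m, rfl⟩
        exact ⟨⟨m⟩, rfl⟩
  calc #{s : Set X // s.Countable} ≤ #(ULift.{u} ℕ → Option X) := mk_le_of_surjective hsurj
    _ = #(Option X) ^ (aleph0 : Cardinal.{u}) := by
        rw [← power_def, mk_uLift, mk_nat, lift_aleph0]
    _ ≤ (aleph 1 : Cardinal.{u}) ^ (aleph0 : Cardinal.{u}) := by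
        refine power_le_power_right ?_
        rw [mk_option]
        calc #X + 1 ≤ aleph 1 + 1 := add_le_add_left hX 1
          _ = aleph 1 := Cardinal.add_one_eq (aleph0_le_aleph 1)
    _ = aleph 1 := aleph1_power_aleph0 hCH

theorem key {C H I : Type u}
    (hH : #H ≤ aleph 1)
    (D : I → Set C) (hD : ∀ i, (D i).Countable)
    (t : I → C → H)
    (hconf : ∀ i j : I, i ≠ j → ∃ c, c ∈ D i ∧ c ∈ D j ∧ t i c ≠ t j c) :
    Cardinal.mk I ≤ aleph 1 := by
  classical
  by_contra hbig
  have h2 : (aleph 2 : Cardinal.{u}) ≤ Cardinal.mk I := aleph2_le_of_not_le hbig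
  let W : Type u := (aleph 2 : Cardinal.{u}).ord.ToType
  have hWI : #W ≤ #I := by rw [mk_ord_toType]; exact h2
  obtain ⟨e⟩ : Nonempty (W ↪ I) := (Cardinal.le_def W I).1 hWI
  haveI hWne : Nonempty W := by
    rw [← mk_ne_zero_iff]
    rw [mk_ord_toType]
    exact (aleph_pos 2).ne'
  -- the union of earlier domains
  let U : W → Set C := fun w => ⋃ v ∈ Iio w, D (e v)
  have hUD : ∀ {v w : W}, v < w → D (e v) ⊆ U w := fun {v w} h =>
    subset_biUnion_of_mem (u := fun v => D (e v)) h
  have hUmono : ∀ {v w : W}, v ≤ w → U v ⊆ U w := by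
    intro v w hvw x hx
    obtain ⟨u, hu, hxu⟩ := mem_iUnion₂.1 hx
    exact mem_iUnion₂.2 ⟨u, lt_of_lt_of_le hu hvw, hxu⟩
  have hUsize : ∀ w : W, #(U w) ≤ aleph 1 := by
    intro w
    have h1 : #(↥(Iio w)) ≤ aleph 1 := le_aleph1_of_lt_aleph2 (mk_Iio_ord_toType w)
    have h2 : (⨆ v : ↥(Iio w), #(↥(D (e v.1)))) ≤ aleph 1 := by
      refine ciSup_le' fun v => ?_
      haveI : Countable ↥(D (e v.1)) := (hD (e v.1)).to_subtype
      exact le_trans mk_le_aleph0 (aleph0_le_aleph 1)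
    refine le_trans (mk_biUnion_le (fun v => D (e v)) (Iio w)) ?_
    calc #(↥(Iio w)) * ⨆ v : ↥(Iio w), #(↥(D (e v.1))) ≤ aleph 1 * aleph 1 :=
          mul_le_mul' h1 h2
      _ = aleph 1 := mul_eq_self (aleph0_le_aleph 1)
  -- the sets B v
  let B : W → Set W := fun v => {w | D (e w) ∩ U w ⊆ U v}
  by_cases hsmall : ∀ v : W, #(B v) ≤ aleph 1
  · -- recursion of length ω₁ gives a contradiction
    have hBbound : ∀ v : W, ∃ b, ∀ x ∈ B v, x < b := fun v =>
      exists_gt_of_small isRegular_aleph_two (lt_of_le_of_lt (hsmall v) aleph1_lt_aleph2)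
    choose bnd hbnd using hBbound
    let W1 : Type u := (aleph 1 : Cardinal.{u}).ord.ToType
    have hlub : ∀ S : Set W, #S ≤ aleph 1 →
        ∃ b : W, (∀ x ∈ S, x < b) ∧ ∀ v, v < b → ∃ x ∈ S, v ≤ x :=
      fun S hS => exists_lub isRegular_aleph_two (lt_of_le_of_lt hS aleph1_lt_aleph2)
    let step : Set W → W := fun S =>
      if h : #S ≤ aleph 1 then (hlub S h).choose else Classical.arbitrary W
    have hstep : ∀ S : Set W, (h : #S ≤ aleph 1) →
        (∀ x ∈ S, x < step S) ∧ ∀ v, v < step S → ∃ x ∈ S, v ≤ x := by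
      intro S hS
      have : step S = (hlub S hS).choose := dif_pos hS
      rw [this]
      exact (hlub S hS).choose_spec
    let w : W1 → W := WellFounded.fix (wellFounded_lt)
      (fun ι rec => step (⋃ ζ : ↥(Iio ι), ({rec ζ.1 ζ.2, bnd (rec ζ.1 ζ.2)} : Set W)))
    have hw : ∀ ι : W1, w ι = step (⋃ ζ : ↥(Iio ι), ({w ζ.1, bnd (w ζ.1)} : Set W)) :=
      fun ι => WellFounded.fix_eq _ _ ι
    have hsize : ∀ ι : W1, #(⋃ ζ : ↥(Iio ι), ({w ζ.1, bnd (w ζ.1)} : Set W)) ≤ aleph 1 := by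
      intro ι
      have h1 : #(↥(Iio ι)) ≤ aleph 1 := le_of_lt (mk_Iio_ord_toType ι)
      have h2 : (⨆ ζ : ↥(Iio ι), #(↥({w ζ.1, bnd (w ζ.1)} : Set W))) ≤ aleph 1 := by
        refine ciSup_le' fun ζ => ?_
        haveI : Countable ↥({w ζ.1, bnd (w ζ.1)} : Set W) :=
          (((Set.finite_singleton _).insert _).countable).to_subtype
        exact le_trans mk_le_aleph0 (aleph0_le_aleph 1)
      refine le_trans (mk_iUnion_le _) ?_
      calc #(↥(Iio ι)) * ⨆ ζ : ↥(Iio ι), #(↥({w ζ.1, bnd (w ζ.1)} : Set W)) ≤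
            aleph 1 * aleph 1 := mul_le_mul' h1 h2
        _ = aleph 1 := mul_eq_self (aleph0_le_aleph 1)
    have hwmono : ∀ {ζ ι : W1}, ζ < ι → w ζ < w ι := by
      intro ζ ι h
      rw [hw ι]
      exact (hstep _ (hsize ι)).1 _ (mem_iUnion.2 ⟨⟨ζ, h⟩, Or.inl rfl⟩)
    have hbndlt : ∀ {ζ ι : W1}, ζ < ι → bnd (w ζ) < w ι := by
      intro ζ ι h
      rw [hw ι]
      exact (hstep _ (hsize ι)).1 _ (mem_iUnion.2 ⟨⟨ζ, h⟩, Or.inr rfl⟩)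
    let R : Set W := range w ∪ range fun ι => bnd (w ι)
    have hRsize : #R ≤ aleph 1 := by
      refine le_trans (mk_union_le _ _) ?_
      have h1 : #(range w) ≤ aleph 1 := by
        refine le_trans mk_range_le ?_
        rw [mk_ord_toType]
      have h2 : #(range fun ι => bnd (w ι)) ≤ aleph 1 := by
        refine le_trans mk_range_le ?_
        rw [mk_ord_toType]
      calc #(range w) + #(range fun ι => bnd (w ι)) ≤ aleph 1 + aleph 1 := add_le_add h1 h2
        _ = aleph 1 := add_eq_self (aleph0_le_aleph 1)
    set ηs : W := step R with hηs
    have hη1 : ∀ ι, w ι < ηs := fun ι => (hstep R hRsize).1 _ (Or.inl ⟨ι, rfl⟩)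
    have hη2 : ∀ ι, bnd (w ι) < ηs := fun ι => (hstep R hRsize).1 _ (Or.inr ⟨ι, rfl⟩)
    have hW1succ : ∀ ι : W1, ∃ ι', ι < ι' :=
      exists_gt_single Cardinal.isRegular_aleph_one
    have hcover : ∀ c ∈ U ηs, ∃ ι : W1, c ∈ U (w ι) := by
      intro c hc
      obtain ⟨v, hv, hcD⟩ := mem_iUnion₂.1 hc
      obtain ⟨x, hxR, hvx⟩ := (hstep R hRsize).2 v hv
      rcases hxR with ⟨ι, rfl⟩ | ⟨ι, rfl⟩
      · obtain ⟨ι', hι'⟩ := hW1succ ι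
        exact ⟨ι', hUD (lt_of_le_of_lt hvx (hwmono hι')) hcD⟩
      · obtain ⟨ι', hι'⟩ := hW1succ ι
        exact ⟨ι', hUD (lt_of_le_of_lt hvx (hbndlt hι')) hcD⟩
    have hP : (D (e ηs) ∩ U ηs).Countable := (hD _).mono inter_subset_left
    choose k hk using fun cc : ↥(D (e ηs) ∩ U ηs) => hcover cc.1 cc.2.2
    have hkr : #(range k) < aleph 1 :=
      lt_of_le_of_lt mk_range_le ((countable_iff_lt_aleph_one _).1 hP)
    obtain ⟨ι0, hι0⟩ := exists_gt_of_small Cardinal.isRegular_aleph_one hkr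
    have hmem : ηs ∈ B (w ι0) := by
      intro cx hcx
      have h1 : cx ∈ U (w (k ⟨cx, hcx⟩)) := hk ⟨cx, hcx⟩
      exact hUmono (le_of_lt (hwmono (hι0 _ ⟨⟨cx, hcx⟩, rfl⟩))) h1
    exact absurd (hη2 ι0) (asymm (hbnd (w ι0) ηs hmem))
  · push_neg at hsmall
    obtain ⟨v0, hv0⟩ := hsmall
    let X : Type u := ↥(U v0) × H
    have hX : #X ≤ aleph 1 := by
      have : #X = #(↥(U v0)) * #H := by
        rw [mk_prod, lift_id, lift_id]
      rw [this]
      calc #(↥(U v0)) * #H ≤ aleph 1 * aleph 1 := mul_le_mul' (hUsize v0) hH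
        _ = aleph 1 := mul_eq_self (aleph0_le_aleph 1)
    have hGc : ∀ η : ↥(B v0), {z : X | z.1.1 ∈ D (e η.1) ∧ z.2 = t (e η.1) z.1.1}.Countable := by
      intro η
      have hbase : {cc : ↥(U v0) | cc.1 ∈ D (e η.1)}.Countable :=
        (hD (e η.1)).preimage Subtype.val_injective
      have himg : {z : X | z.1.1 ∈ D (e η.1) ∧ z.2 = t (e η.1) z.1.1} =
          (fun cc : ↥(U v0) => ((cc, t (e η.1) cc.1) : X)) '' {cc | cc.1 ∈ D (e η.1)} := by
        ext z
        constructor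
        · rintro ⟨h1, h2⟩
          exact ⟨z.1, h1, Prod.ext rfl h2.symm⟩
        · rintro ⟨cc, hcc, rfl⟩
          exact ⟨hcc, rfl⟩
      rw [himg]
      exact hbase.image _
    let G : ↥(B v0) → {s : Set X // s.Countable} := fun η =>
      ⟨{z : X | z.1.1 ∈ D (e η.1) ∧ z.2 = t (e η.1) z.1.1}, hGc η⟩
    have hGni : ¬ Function.Injective G := by
      intro hinj
      exact absurd (le_trans (mk_le_of_injective hinj) (mk_countable_subsets hCH hX)) (not_le.2 hv0)
    rw [Function.not_injective_iff] at hGni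
    obtain ⟨η₁, η₂, hGeq, hne⟩ := hGni
    have key2 : ∀ η₁ η₂ : ↥(B v0), (η₁ : W) < (η₂ : W) → G η₁ = G η₂ → False := by
      intro η₁ η₂ hlt hG
      have hie : e η₁.1 ≠ e η₂.1 := fun h => absurd (e.injective h) (ne_of_lt hlt)
      obtain ⟨c, hc1, hc2, hct⟩ := hconf _ _ hie
      have hcU2 : c ∈ U (η₂ : W) := hUD hlt hc1
      have hcUv0 : c ∈ U v0 := η₂.2 ⟨hc2, hcU2⟩
      have hz : ((⟨c, hcUv0⟩, t (e η₁.1) c) : X) ∈ (G η₁).1 := ⟨hc1, rfl⟩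
      have hz2 : ((⟨c, hcUv0⟩, t (e η₁.1) c) : X) ∈ (G η₂).1 := by rw [← hG]; exact hz
      exact hct hz2.2
    rcases lt_or_gt_of_ne (fun h : (η₁ : W) = (η₂ : W) => hne (Subtype.ext h)) with h | h
    · exact key2 η₁ η₂ h hGeq
    · exact key2 η₂ η₁ h hGeq.symm


omit hCH in
theorem exists_big_fiber {Y L : Type u} (hL : #L ≤ aleph 1) (h2 : aleph 2 ≤ #Y) (φ : Y → L) :
    ∃ l : L, ¬ (#(↥(φ ⁻¹' {l})) ≤ aleph 1) := by
  by_contra hall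
  push_neg at hall
  have huniv : (univ : Set Y) = ⋃ l : L, φ ⁻¹' {l} := by
    ext y; simp
  have hY : #Y ≤ aleph 1 := by
    calc #Y = #(↥(univ : Set Y)) := mk_univ.symm
      _ = #(↥(⋃ l : L, φ ⁻¹' {l})) := by rw [huniv]
      _ ≤ #L * ⨆ l : L, #(↥(φ ⁻¹' {l})) := mk_iUnion_le _
      _ ≤ aleph 1 * aleph 1 := mul_le_mul' hL (ciSup_le' fun l => hall l)
      _ = aleph 1 := mul_eq_self (aleph0_le_aleph 1)
  exact absurd (le_trans h2 hY) (not_le.2 aleph1_lt_aleph2)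

end CC


namespace CCT
open Cardinal Set

universe v w

/-- The type of traces of (pairs of) automorphisms on the countable set `T↾(ᾱ+1)`. -/
def TraceFun (T : OmegaOneTree α) (abar : Ordinal.{0}) : Type :=
  ↥{x : α | T.height x ≤ abar} →
    ↥{x : α | T.height x ≤ abar} × ↥{x : α | T.height x ≤ abar}

/-- The trace of a pair of functions on `T↾(ᾱ+1)`. -/
def trace (T : OmegaOneTree α) (abar : Ordinal.{0}) (f g : α → α) : TraceFun T abar :=
  fun x =>
    ((if h : T.height (f x.1) ≤ abar then (⟨f x.1, h⟩ : ↥{x : α | T.height x ≤ abar}) else x),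
     (if h : T.height (g x.1) ≤ abar then (⟨g x.1, h⟩ : ↥{x : α | T.height x ≤ abar}) else x))

theorem trace_eq {T : OmegaOneTree α} {abar : Ordinal.{0}} {f g f' g' : α → α}
    (hf : ∀ x : α, T.height x ≤ abar → T.height (f x) ≤ abar)
    (hg : ∀ x : α, T.height x ≤ abar → T.height (g x) ≤ abar)
    (hf' : ∀ x : α, T.height x ≤ abar → T.height (f' x) ≤ abar)
    (hg' : ∀ x : α, T.height x ≤ abar → T.height (g' x) ≤ abar)
    (h : trace T abar f g = trace T abar f' g') :
    ∀ x : α, T.height x ≤ abar → f x = f' x ∧ g x = g' x := by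
  intro x hx
  have h1 := congrFun h ⟨x, hx⟩
  constructor
  · have h2 := congrArg Prod.fst h1
    simp only [trace] at h2
    rw [dif_pos (hf x hx), dif_pos (hf' x hx)] at h2
    exact congrArg Subtype.val h2
  · have h2 := congrArg Prod.snd h1
    simp only [trace] at h2
    rw [dif_pos (hg x hx), dif_pos (hg' x hx)] at h2
    exact congrArg Subtype.val h2

theorem level_le_countable (T : OmegaOneTree α) {abar : Ordinal.{0}}
    (habar : abar < omega1) : ({x : α | T.height x ≤ abar}).Countable := by
  have h1 : (Set.Iio (abar + 1) : Set Ordinal.{0}).Countable := by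
    rw [Cardinal.countable_iff_lt_aleph_one, Ordinal.mk_Iio_ordinal]
    have hsucc : abar + 1 < omega1 := by
      rw [Ordinal.add_one_eq_succ]
      exact (Cardinal.isSuccLimit_ord (Cardinal.aleph0_le_aleph 1)).succ_lt habar
    have hcard : (abar + 1).card < Cardinal.aleph 1 := Cardinal.lt_ord.1 hsucc
    calc Cardinal.lift.{1} (abar + 1).card
        < Cardinal.lift.{1} (Cardinal.aleph 1) := Cardinal.lift_lt.2 hcard
      _ = Cardinal.aleph 1 := by simp
  have h2 : (Set.Iic abar : Set Ordinal.{0}).Countable := by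
    refine h1.mono fun β hβ => ?_
    refine Set.mem_Iio.2 (lt_of_le_of_lt (Set.mem_Iic.1 hβ) ?_)
    rw [Ordinal.add_one_eq_succ]
    exact Order.lt_succ abar
  refine (h2.biUnion fun β _ => T.level_countable β).mono fun x hx => ?_
  exact Set.mem_biUnion hx rfl

theorem mk_traceFun (T : OmegaOneTree α) {abar : Ordinal.{0}}
    (habar : abar < omega1) :
    Cardinal.mk (TraceFun T abar) ≤ (2 : Cardinal.{0}) ^ (Cardinal.aleph0 : Cardinal.{0}) := by
  haveI : Countable ↥{x : α | T.height x ≤ abar} := (level_le_countable T habar).to_subtype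
  calc Cardinal.mk (TraceFun T abar)
      = Cardinal.mk (↥{x : α | T.height x ≤ abar} × ↥{x : α | T.height x ≤ abar}) ^
          Cardinal.mk ↥{x : α | T.height x ≤ abar} := (Cardinal.power_def _ _).symm
    _ ≤ (Cardinal.aleph0 : Cardinal.{0}) ^ Cardinal.mk ↥{x : α | T.height x ≤ abar} :=
        Cardinal.power_le_power_right Cardinal.mk_le_aleph0
    _ ≤ (Cardinal.aleph0 : Cardinal.{0}) ^ (Cardinal.aleph0 : Cardinal.{0}) :=
        Cardinal.power_le_power_left Cardinal.aleph0_ne_zero Cardinal.mk_le_aleph0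
    _ = 2 ^ (Cardinal.aleph0 : Cardinal.{0}) := Cardinal.power_self_eq le_rfl

theorem compatible_of_agree {T : OmegaOneTree α} {κ : Ordinal.{w}}
    (p q : AutoCond T κ) (abar : Ordinal.{0}) (habar : abar < omega1)
    (hp : p.top = abar) (hq : q.top = abar)
    (hagree : ∀ τ ∈ p.dom, τ ∈ q.dom → ∀ x : α, T.height x ≤ abar →
      p.fn τ x = q.fn τ x ∧ p.inv τ x = q.inv τ x) :
    AutoCompatible p q := by
  classical
  refine ⟨⟨p.dom ∪ q.dom, Set.union_subset p.dom_sub q.dom_sub,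
    p.dom_countable.union q.dom_countable, abar, habar,
    fun τ => if τ ∈ p.dom then p.fn τ else q.fn τ,
    fun τ => if τ ∈ p.dom then p.inv τ else q.inv τ, ?_⟩,
    ⟨Set.subset_union_left, le_of_eq hp, ?_⟩,
    ⟨Set.subset_union_right, le_of_eq hq, ?_⟩⟩
  · intro τ hτ
    by_cases h : τ ∈ p.dom
    · simp only [if_pos h]
      exact hp ▸ p.fn_auto τ h
    · have hq1 : τ ∈ q.dom := hτ.resolve_left h
      simp only [if_neg h]
      exact hq ▸ q.fn_auto τ hq1
  · intro τ hτ x hx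
    constructor
    · show (if τ ∈ p.dom then p.fn τ else q.fn τ) x = p.fn τ x
      rw [if_pos hτ]
    · show (if τ ∈ p.dom then p.inv τ else q.inv τ) x = p.inv τ x
      rw [if_pos hτ]
  · intro τ hτ x hx
    rw [hq] at hx
    by_cases h : τ ∈ p.dom
    · obtain ⟨h1, h2⟩ := hagree τ h hτ x hx
      constructor
      · show (if τ ∈ p.dom then p.fn τ else q.fn τ) x = q.fn τ x
        rw [if_pos h]; exact h1
      · show (if τ ∈ p.dom then p.inv τ else q.inv τ) x = q.inv τ x
        rw [if_pos h]; exact h2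
    · constructor
      · show (if τ ∈ p.dom then p.fn τ else q.fn τ) x = q.fn τ x
        rw [if_neg h]
      · show (if τ ∈ p.dom then p.inv τ else q.inv τ) x = q.inv τ x
        rw [if_neg h]

theorem fiber_small (T : OmegaOneTree α) (κ : Ordinal.{w})
    (hCH : (2 : Cardinal.{1}) ^ (Cardinal.aleph0 : Cardinal.{1}) = Cardinal.aleph 1)
    (A : Set (AutoCond T κ))
    (hanti : ∀ p ∈ A, ∀ q ∈ A, p ≠ q → ¬ AutoCompatible p q)
    (abar : Ordinal.{0}) (habar : abar < omega1)
    (Fib : Set (AutoCond T κ)) (hFibA : Fib ⊆ A)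
    (hFibtop : ∀ p ∈ Fib, p.top = abar) :
    Cardinal.mk ↥Fib ≤ Cardinal.aleph 1 := by
  classical
  have hH : Cardinal.mk (ULift.{w + 1} (TraceFun T abar)) ≤ Cardinal.aleph 1 := by
    rw [Cardinal.mk_uLift]
    calc Cardinal.lift.{w + 1} (Cardinal.mk (TraceFun T abar))
        ≤ Cardinal.lift.{w + 1} ((2 : Cardinal.{0}) ^ (Cardinal.aleph0 : Cardinal.{0})) :=
          Cardinal.lift_le.2 (mk_traceFun T habar)
      _ = (2 : Cardinal.{w + 1}) ^ (Cardinal.aleph0 : Cardinal.{w + 1}) := by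
          rw [Cardinal.lift_power, Cardinal.lift_aleph0, Cardinal.lift_two]
      _ = Cardinal.aleph 1 := CC.CH_any hCH
  refine CC.key (CC.CH_any hCH) hH
    (fun p : ↥Fib => (ULift.down : ULift.{1} Ordinal.{w} → Ordinal.{w}) ⁻¹' p.1.dom)
    (fun p => (p.1.dom_countable).preimage ULift.down_injective)
    (fun p c => ULift.up (trace T abar (p.1.fn c.down) (p.1.inv c.down)))
    ?_
  intro p q hpq
  by_contra hcon
  push_neg at hcon
  have hptop : p.1.top = abar := hFibtop p.1 p.2
  have hqtop : q.1.top = abar := hFibtop q.1 q.2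
  have hagree : ∀ τ ∈ p.1.dom, τ ∈ q.1.dom → ∀ x : α, T.height x ≤ abar →
      p.1.fn τ x = q.1.fn τ x ∧ p.1.inv τ x = q.1.inv τ x := by
    intro τ hp1 hq1
    have h := hcon (ULift.up τ) hp1 hq1
    have h2 : trace T abar (p.1.fn τ) (p.1.inv τ) = trace T abar (q.1.fn τ) (q.1.inv τ) :=
      congrArg ULift.down h
    refine trace_eq ?_ ?_ ?_ ?_ h2
    · intro x hx
      rw [(p.1.fn_auto τ hp1).1 x (hptop ▸ hx)]
      exact hx
    · intro x hx
      rw [(p.1.fn_auto τ hp1).2.1 x (hptop ▸ hx)]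
      exact hx
    · intro x hx
      rw [(q.1.fn_auto τ hq1).1 x (hqtop ▸ hx)]
      exact hx
    · intro x hx
      rw [(q.1.fn_auto τ hq1).2.1 x (hqtop ▸ hx)]
      exact hx
  have hPQ : p.1 ≠ q.1 := fun h => hpq (Subtype.ext h)
  exact hanti p.1 (hFibA p.2) q.1 (hFibA q.2) hPQ
    (compatible_of_agree p.1 q.1 abar habar hptop hqtop hagree)

end CCT

/-- Lemma 5.36: assuming CH, the automorphism forcing `ℙ` is `ω₂`-c.c.:
every antichain has cardinality less than `ℵ₂`. -/
theorem auto_forcing_omega2_cc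
    (T : OmegaOneTree α) (κ : Ordinal) (hκ : 0 < κ)
    (hCH : (2 : Cardinal.{1}) ^ (Cardinal.aleph0 : Cardinal.{1}) = Cardinal.aleph 1)
    (A : Set (AutoCond T κ))
    (hanti : ∀ p ∈ A, ∀ q ∈ A, p ≠ q → ¬ AutoCompatible p q) :
    Cardinal.mk ↥A < Cardinal.aleph 2 := by
  classical
  by_contra hlt
  have h2 : Cardinal.aleph 2 ≤ Cardinal.mk ↥A := not_lt.1 hlt
  have hL : Cardinal.mk (ULift.{u_1 + 1} ↥(Set.Iio omega1.{0})) ≤ Cardinal.aleph 1 := by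
    rw [Cardinal.mk_uLift, Ordinal.mk_Iio_ordinal, Cardinal.lift_lift]
    rw [show omega1.{0}.card = Cardinal.aleph 1 from Cardinal.card_ord _]
    simp
  obtain ⟨l, hl⟩ := CC.exists_big_fiber hL h2
    (fun p : ↥A => ULift.up (⟨p.1.top, p.1.top_lt⟩ : ↥(Set.Iio omega1.{0})))
  set φ : ↥A → ULift.{u_1 + 1} ↥(Set.Iio omega1.{0}) :=
    fun p => ULift.up (⟨p.1.top, p.1.top_lt⟩ : ↥(Set.Iio omega1.{0})) with hφ
  refine hl ?_
  have hseq : Cardinal.mk ↥(Subtype.val '' (φ ⁻¹' {l}) : Set (AutoCond T κ)) =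
      Cardinal.mk ↥(φ ⁻¹' {l}) := Cardinal.mk_image_eq Subtype.val_injective
  rw [← hseq]
  refine CCT.fiber_small T κ hCH A hanti l.down.1 l.down.2 _ ?_ ?_
  · rintro x ⟨p, _, rfl⟩
    exact p.2
  · rintro x ⟨p, hp, rfl⟩
    exact congrArg (fun z : ULift.{u_1 + 1} ↥(Set.Iio omega1.{0}) => (z.down.1 : Ordinal)) hp
end
end
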